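/- arXiv:1608.05358 — 4 statements merged into one kernel-verified Lean document; each statement's English description precedes it below -/
import Mathlib

section
/- If h is a part-preserving homomorphism from pattern P1 to pattern P2, and P3 is the subdivision of P2 at parts U and V, then there is a part-preserving homomorphism from the subdivision of P1 at the parts h^{-1}(U) and h^{-1}(V) to P3. Consequently, the topological-minor occurrence relation is transitive: if P →TM P' and P' →TM P'', then P →TM P''. -/
/-- A pattern: a set of points with an equivalence relation `sim` (whose classes
are the parts), and symmetric relations `pos` (positive edges) and `neg`
(negative edges), each disjoint from `sim`. -/
structure Pattern where
  X : Type
  sim : X → X → Prop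
  pos : X → X → Prop
  neg : X → X → Prop
  sim_equiv : Equivalence sim
  pos_symm : ∀ ⦃x y⦄, pos x y → pos y x
  neg_symm : ∀ ⦃x y⦄, neg x y → neg y x
  sim_pos : ∀ ⦃x y⦄, sim x y → ¬ pos x y
  sim_neg : ∀ ⦃x y⦄, sim x y → ¬ neg x y

/-- A homomorphism of patterns. -/
def IsHom (P Q : Pattern) (h : P.X → Q.X) : Prop :=
  (∀ x y, P.sim x y → Q.sim (h x) (h y)) ∧
  (∀ x y, P.pos x y → Q.pos (h x) (h y)) ∧
  (∀ x y, P.neg x y → Q.neg (h x) (h y))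

/-- A part-preserving map: non-equivalent points map to non-equivalent points. -/
def PreservesParts (P Q : Pattern) (h : P.X → Q.X) : Prop :=
  ∀ x y, ¬ P.sim x y → ¬ Q.sim (h x) (h y)

/-- `P` occurs as a sub-pattern in `Q`. -/
def SP (P Q : Pattern) : Prop :=
  ∃ h : P.X → Q.X, IsHom P Q h ∧ PreservesParts P Q h

/-- New points subdividing the positive edges between the parts of `u` and `v`. -/
def PosZ (P : Pattern) (u v : P.X) : Type :=
  {p : P.X × P.X // P.sim p.1 u ∧ P.sim p.2 v ∧ P.pos p.1 p.2}

/-- New points subdividing the negative edges between the parts of `u` and `v`: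
`false` is the point attached to the `u`-side, `true` to the `v`-side. -/
def NegZ (P : Pattern) (u v : P.X) : Type :=
  {p : P.X × P.X // P.sim p.1 u ∧ P.sim p.2 v ∧ P.neg p.1 p.2} × Bool

/-- The subdivision of the pattern `P` at the (distinct) parts of `u` and `v`. -/
def SubdivOne (P : Pattern) (u v : P.X) : Pattern where
  X := P.X ⊕ (PosZ P u v ⊕ NegZ P u v)
  sim := fun a b => match a, b with
    | .inl x, .inl y => P.sim x y
    | .inr _, .inr _ => True
    | _, _ => False
  pos := fun a b => match a, b with
    | .inl x, .inl y => P.pos x y ∧ ¬((P.sim x u ∧ P.sim y v) ∨ (P.sim x v ∧ P.sim y u))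
    | .inl x, .inr (.inl z) => x = z.1.1 ∨ x = z.1.2
    | .inr (.inl z), .inl x => x = z.1.1 ∨ x = z.1.2
    | _, _ => False
  neg := fun a b => match a, b with
    | .inl x, .inl y => P.neg x y ∧ ¬((P.sim x u ∧ P.sim y v) ∨ (P.sim x v ∧ P.sim y u))
    | .inl x, .inr (.inr z) => (z.2 = false ∧ x = z.1.1.1) ∨ (z.2 = true ∧ x = z.1.1.2)
    | .inr (.inr z), .inl x => (z.2 = false ∧ x = z.1.1.1) ∨ (z.2 = true ∧ x = z.1.1.2)
    | _, _ => False
  sim_equiv := by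
    refine ⟨?_, ?_, ?_⟩
    · rintro (x | z)
      · exact P.sim_equiv.refl x
      · trivial
    · rintro (x | z) (y | w) h
      · exact P.sim_equiv.symm h
      · exact h.elim
      · exact h.elim
      · trivial
    · rintro (x | z) (y | w) (t | s) h1 h2
      · exact P.sim_equiv.trans h1 h2
      · exact h2.elim
      · exact h1.elim
      · exact h1.elim
      · exact h1.elim
      · exact h1.elim
      · exact h2.elim
      · trivial
  pos_symm := by
    rintro (x | (z | z)) (y | (w | w)) h <;>
      first
        | exact h.elim
        | skip
    · exact ⟨P.pos_symm h.1, fun hc => h.2 (hc.elim (fun c => Or.inr ⟨c.2, c.1⟩) (fun c => Or.inl ⟨c.2, c.1⟩))⟩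
    · exact h
    · exact h
  neg_symm := by
    rintro (x | (z | z)) (y | (w | w)) h <;>
      first
        | exact h.elim
        | skip
    · exact ⟨P.neg_symm h.1, fun hc => h.2 (hc.elim (fun c => Or.inr ⟨c.2, c.1⟩) (fun c => Or.inl ⟨c.2, c.1⟩))⟩
    · exact h
    · exact h
  sim_pos := by
    rintro (x | (z | z)) (y | (w | w)) h hp <;>
      first
        | exact h
        | exact hp
        | exact P.sim_pos h hp.1
  sim_neg := by
    rintro (x | (z | z)) (y | (w | w)) h hp <;>
      first
        | exact h
        | exact hp
        | exact P.sim_neg h hp.1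

/-- One subdivision step between patterns. -/
def SubdivStep (P Q : Pattern) : Prop :=
  ∃ u v : P.X, ¬ P.sim u v ∧ Q = SubdivOne P u v

/-- `Q` is obtained from `P` by a (possibly empty) sequence of subdivisions. -/
def IsSubdivision : Pattern → Pattern → Prop :=
  Relation.ReflTransGen SubdivStep

/-- `P` occurs as a topological minor in `Q`. -/
def TM (P Q : Pattern) : Prop :=
  ∃ P' : Pattern, IsSubdivision P P' ∧ SP P' Q

/-- A binary CSP instance: finitely many variables, finite domains, and a
symmetric family of binary constraints. -/
structure CSPInstance where
  V : Type
  finV : Finite V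
  D : V → Type
  finD : ∀ v, Finite (D v)
  R : ∀ u v : V, D u → D v → Prop
  symmR : ∀ u v a b, R u v a b → R v u b a

/-- The pattern associated with a binary CSP instance. -/
def Pat (I : CSPInstance) : Pattern where
  X := Σ v : I.V, I.D v
  sim := fun x y => x.1 = y.1
  pos := fun x y => x.1 ≠ y.1 ∧ I.R x.1 y.1 x.2 y.2
  neg := fun x y => x.1 ≠ y.1 ∧ ¬ I.R x.1 y.1 x.2 y.2
  sim_equiv := ⟨fun _ => rfl, Eq.symm, Eq.trans⟩
  pos_symm := fun _ _ h => ⟨Ne.symm h.1, I.symmR _ _ _ _ h.2⟩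
  neg_symm := fun _ _ h => ⟨Ne.symm h.1, fun hr => h.2 (I.symmR _ _ _ _ hr)⟩
  sim_pos := fun _ _ h hp => hp.1 h
  sim_neg := fun _ _ h hn => hn.1 h

/-- The class of instances avoiding `P` as a sub-pattern. -/
def ForbSP (P : Pattern) : Set CSPInstance := {I | ¬ SP P (Pat I)}

/-- The class of instances avoiding `P` as a topological minor. -/
def ForbTM (P : Pattern) : Set CSPInstance := {I | ¬ TM P (Pat I)}

/-- Generalized lifting lemma: only requires the chosen preimage points to be
in the parts of `u` and `v` (up to `sim`). -/
theorem lift_aux (P1 P2 : Pattern) (h : P1.X → P2.X) (hhom : IsHom P1 P2 h)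
    (hpp : PreservesParts P1 P2 h) (u v : P2.X) (huv : ¬ P2.sim u v)
    (u1 v1 : P1.X) (hu1 : P2.sim (h u1) u) (hv1 : P2.sim (h v1) v) :
    ∃ g : (SubdivOne P1 u1 v1).X → (SubdivOne P2 u v).X,
      IsHom (SubdivOne P1 u1 v1) (SubdivOne P2 u v) g ∧
      PreservesParts (SubdivOne P1 u1 v1) (SubdivOne P2 u v) g := by
  obtain ⟨hsim, hpos, hneg⟩ := hhom
  have hsu : ∀ x, P1.sim x u1 → P2.sim (h x) u :=
    fun x hx => P2.sim_equiv.trans (hsim x u1 hx) hu1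
  have hsv : ∀ x, P1.sim x v1 → P2.sim (h x) v :=
    fun x hx => P2.sim_equiv.trans (hsim x v1 hx) hv1
  have key_u : ∀ x, P2.sim (h x) u → P1.sim x u1 := by
    intro x hx
    by_contra hc
    exact hpp x u1 hc (P2.sim_equiv.trans hx (P2.sim_equiv.symm hu1))
  have key_v : ∀ x, P2.sim (h x) v → P1.sim x v1 := by
    intro x hx
    by_contra hc
    exact hpp x v1 hc (P2.sim_equiv.trans hx (P2.sim_equiv.symm hv1))
  refine ⟨Sum.elim (fun x => Sum.inl (h x))
    (Sum.elim
      (fun z => Sum.inr (Sum.inl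
        ⟨(h z.1.1, h z.1.2), hsu _ z.2.1, hsv _ z.2.2.1, hpos _ _ z.2.2.2⟩))
      (fun zb => Sum.inr (Sum.inr
        (⟨(h zb.1.1.1, h zb.1.1.2), hsu _ zb.1.2.1, hsv _ zb.1.2.2.1,
          hneg _ _ zb.1.2.2.2⟩, zb.2)))), ⟨?_, ?_, ?_⟩, ?_⟩
  · rintro (x | (z | z)) (y | (w | w)) hs <;>
      first
        | exact hs.elim
        | exact hsim _ _ hs
        | trivial
  · rintro (x | (z | z)) (y | (w | w)) hp <;>
      first
        | exact hp.elim
        | skip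
    · refine ⟨hpos _ _ hp.1, ?_⟩
      rintro (⟨hxu, hyv⟩ | ⟨hxv, hyu⟩)
      · exact hp.2 (Or.inl ⟨key_u _ hxu, key_v _ hyv⟩)
      · exact hp.2 (Or.inr ⟨key_v _ hxv, key_u _ hyu⟩)
    · rcases hp with h1 | h1 <;> [exact Or.inl (congrArg h h1); exact Or.inr (congrArg h h1)]
    · rcases hp with h1 | h1 <;> [exact Or.inl (congrArg h h1); exact Or.inr (congrArg h h1)]
  · rintro (x | (z | z)) (y | (w | w)) hp <;>
      first
        | exact hp.elim
        | skip
    · refine ⟨hneg _ _ hp.1, ?_⟩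
      rintro (⟨hxu, hyv⟩ | ⟨hxv, hyu⟩)
      · exact hp.2 (Or.inl ⟨key_u _ hxu, key_v _ hyv⟩)
      · exact hp.2 (Or.inr ⟨key_v _ hxv, key_u _ hyu⟩)
    · rcases hp with ⟨hb, h1⟩ | ⟨hb, h1⟩
      · exact Or.inl ⟨hb, congrArg h h1⟩
      · exact Or.inr ⟨hb, congrArg h h1⟩
    · rcases hp with ⟨hb, h1⟩ | ⟨hb, h1⟩
      · exact Or.inl ⟨hb, congrArg h h1⟩
      · exact Or.inr ⟨hb, congrArg h h1⟩
  · rintro (x | (z | z)) (y | (w | w)) hns hs <;>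
      first
        | exact hns trivial
        | exact hs
        | exact hpp _ _ hns hs

theorem sp_trans' (A B C : Pattern) (h1 : SP A B) (h2 : SP B C) : SP A C := by
  obtain ⟨f, ⟨fs, fp, fn⟩, fpp⟩ := h1
  obtain ⟨g, ⟨gs, gp, gn⟩, gpp⟩ := h2
  exact ⟨g ∘ f,
    ⟨fun x y hx => gs _ _ (fs _ _ hx), fun x y hx => gp _ _ (fp _ _ hx),
      fun x y hx => gn _ _ (fn _ _ hx)⟩,
    fun x y hxy => gpp _ _ (fpp _ _ hxy)⟩

theorem sp_step (Q P' R : Pattern) (hsp : SP Q P') (hst : SubdivStep P' R) :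
    ∃ Q', Relation.ReflTransGen SubdivStep Q Q' ∧ SP Q' R := by
  obtain ⟨h, hhom, hpp⟩ := hsp
  obtain ⟨u, v, huv, rfl⟩ := hst
  by_cases hu : ∃ u1, P'.sim (h u1) u
  · by_cases hv : ∃ v1, P'.sim (h v1) v
    · obtain ⟨u1, hu1⟩ := hu
      obtain ⟨v1, hv1⟩ := hv
      have hne : ¬ Q.sim u1 v1 := by
        intro hc
        exact huv (P'.sim_equiv.trans (P'.sim_equiv.symm hu1)
          (P'.sim_equiv.trans (hhom.1 _ _ hc) hv1))
      obtain ⟨g, hg, hgp⟩ := lift_aux Q P' h hhom hpp u v huv u1 v1 hu1 hv1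
      exact ⟨SubdivOne Q u1 v1, Relation.ReflTransGen.single ⟨u1, v1, hne, rfl⟩, g, hg, hgp⟩
    · push_neg at hv
      refine ⟨Q, Relation.ReflTransGen.refl, Sum.inl ∘ h, ⟨?_, ?_, ?_⟩, ?_⟩
      · exact fun x y hs => hhom.1 _ _ hs
      · intro x y hp
        refine ⟨hhom.2.1 _ _ hp, ?_⟩
        rintro (⟨_, hyv⟩ | ⟨hxv, _⟩)
        · exact hv y hyv
        · exact hv x hxv
      · intro x y hn
        refine ⟨hhom.2.2 _ _ hn, ?_⟩
        rintro (⟨_, hyv⟩ | ⟨hxv, _⟩)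
        · exact hv y hyv
        · exact hv x hxv
      · exact fun x y hns => hpp _ _ hns
  · push_neg at hu
    refine ⟨Q, Relation.ReflTransGen.refl, Sum.inl ∘ h, ⟨?_, ?_, ?_⟩, ?_⟩
    · exact fun x y hs => hhom.1 _ _ hs
    · intro x y hp
      refine ⟨hhom.2.1 _ _ hp, ?_⟩
      rintro (⟨hxu, _⟩ | ⟨_, hyu⟩)
      · exact hu x hxu
      · exact hu y hyu
    · intro x y hn
      refine ⟨hhom.2.2 _ _ hn, ?_⟩
      rintro (⟨hxu, _⟩ | ⟨_, hyu⟩)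
      · exact hu x hxu
      · exact hu y hyu
    · exact fun x y hns => hpp _ _ hns

/-- A part-preserving homomorphism lifts to subdivisions, and
consequently topological-minor occurrence is transitive. -/
theorem subdivision_lift_and_TM_trans :
    (∀ (P1 P2 : Pattern) (h : P1.X → P2.X), IsHom P1 P2 h → PreservesParts P1 P2 h →
      ∀ (u v : P2.X), ¬ P2.sim u v →
        ∀ (u1 v1 : P1.X), h u1 = u → h v1 = v →
          ∃ g : (SubdivOne P1 u1 v1).X → (SubdivOne P2 u v).X,
            IsHom (SubdivOne P1 u1 v1) (SubdivOne P2 u v) g ∧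
            PreservesParts (SubdivOne P1 u1 v1) (SubdivOne P2 u v) g) ∧
    (∀ P P' P'' : Pattern, TM P P' → TM P' P'' → TM P P'') := by
  constructor
  · intro P1 P2 h hhom hpp u v huv u1 v1 hu1 hv1
    exact lift_aux P1 P2 h hhom hpp u v huv u1 v1
      (hu1 ▸ P2.sim_equiv.refl _) (hv1 ▸ P2.sim_equiv.refl _)
  · rintro P P' P'' ⟨Q, hPQ, hQ⟩ ⟨P2, hP'P2, hP2⟩
    have main : ∃ Q2, IsSubdivision Q Q2 ∧ SP Q2 P2 := by
      clear hP2
      induction hP'P2 with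
      | refl => exact ⟨Q, Relation.ReflTransGen.refl, hQ⟩
      | tail _ hstep ih =>
        obtain ⟨Q2, hQQ2, hSP⟩ := ih
        obtain ⟨Q3, hQ2Q3, hSP3⟩ := sp_step _ _ _ hSP hstep
        exact ⟨Q3, hQQ2.trans hQ2Q3, hSP3⟩
    obtain ⟨Q2, hQQ2, hSP⟩ := main
    exact ⟨Q2, hPQ.trans hQQ2, sp_trans' _ _ _ hSP hP2⟩
end

section
/- A binary CSP instance I is acyclic (its constraint graph contains no cycle) if and only if the pattern Pat_G(C3) does not occur as a topological minor in Pat(I), where C3 is the 3-cycle graph. -/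
/-- The negative pattern associated with a graph `G`: points are incidences
`(e, v)` with `v ∈ e`, parts group points with the same vertex, and each edge
contributes one negative edge between its two incidence points. -/
def PatG {V : Type} (G : SimpleGraph V) : Pattern where
  X := Σ e : G.edgeSet, {v : V // v ∈ (e : Sym2 V)}
  sim := fun x y => x.2.1 = y.2.1
  pos := fun _ _ => False
  neg := fun x y => x.1 = y.1 ∧ x.2.1 ≠ y.2.1
  sim_equiv := ⟨fun _ => rfl, Eq.symm, Eq.trans⟩
  pos_symm := fun _ _ h => h.elim
  neg_symm := fun _ _ h => ⟨h.1.symm, h.2.symm⟩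
  sim_pos := fun _ _ _ hp => hp
  sim_neg := fun _ _ h hn => hn.2 h

/-- `G` is a star graph with central vertex `c`: connected, acyclic, `c` has
degree greater than 2 and every other vertex has degree at most 2. -/
def IsStarGraph {V : Type} (G : SimpleGraph V) (c : V) : Prop :=
  G.Connected ∧ G.IsAcyclic ∧ 2 < (G.neighborSet c).ncard ∧
    ∀ v : V, v ≠ c → (G.neighborSet v).ncard ≤ 2

/-- `Q` is obtained from `PatG G` by merging zero or more points of the part
corresponding to the central vertex `c`. -/
def IsMergeOf (Q : Pattern) {V : Type} (G : SimpleGraph V) (c : V) : Prop :=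
  ∃ q : (PatG G).X → Q.X, Function.Surjective q ∧
    (∀ x y, q x = q y → x = y ∨ (x.2.1 = c ∧ y.2.1 = c)) ∧
    (∀ a b, Q.sim a b ↔ ∃ x y, q x = a ∧ q y = b ∧ (PatG G).sim x y) ∧
    (∀ a b, ¬ Q.pos a b) ∧
    (∀ a b, Q.neg a b ↔ ∃ x y, q x = a ∧ q y = b ∧ (PatG G).neg x y)

/-- A star pattern: obtained from `PatG G` for some star graph `G` by merging
zero or more points in the central part. -/
def IsStarPattern (Q : Pattern) : Prop :=
  ∃ (V : Type) (_ : Finite V) (G : SimpleGraph V) (c : V),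
    IsStarGraph G c ∧ IsMergeOf Q G c

/-- The negative pattern obtained from `P` by removing all positive edges. -/
def negPart (P : Pattern) : Pattern :=
  { P with
    pos := fun _ _ => False
    pos_symm := fun _ _ h => h.elim
    sim_pos := fun _ _ _ hp => hp }

/-- `P` is star-like: removing its positive edges yields a pattern occurring as
a sub-pattern of some star pattern. -/
def IsStarLike (P : Pattern) : Prop :=
  ∃ Q : Pattern, IsStarPattern Q ∧ SP (negPart P) Q

/-- A bundled graph. -/
structure BGraph where
  V : Type
  G : SimpleGraph V

/-- The subdivision of the edge `{u,v}` of a graph by a new vertex. -/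
def gSubdivOne (A : BGraph) (u v : A.V) : BGraph where
  V := A.V ⊕ Unit
  G :=
    { Adj := fun a b => match a, b with
        | .inl x, .inl y => A.G.Adj x y ∧ ¬((x = u ∧ y = v) ∨ (x = v ∧ y = u))
        | .inl x, .inr _ => x = u ∨ x = v
        | .inr _, .inl x => x = u ∨ x = v
        | .inr _, .inr _ => False
      symm := by
        refine ⟨?_⟩
        rintro (x | x) (y | y) h
        · exact ⟨A.G.adj_symm h.1, fun hc => h.2 (hc.elim (fun c => Or.inr ⟨c.2, c.1⟩)
            (fun c => Or.inl ⟨c.2, c.1⟩))⟩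
        · exact h
        · exact h
        · exact h.elim
      loopless := by
        refine ⟨?_⟩
        rintro (x | x) h
        · exact A.G.irrefl h.1
        · exact h }

/-- One graph-subdivision step. -/
def GSubdivStep (A B : BGraph) : Prop :=
  ∃ u v : A.V, A.G.Adj u v ∧ B = gSubdivOne A u v

/-- `B` is obtained from `A` by a (possibly empty) sequence of edge subdivisions. -/
def IsGraphSubdivision : BGraph → BGraph → Prop :=
  Relation.ReflTransGen GSubdivStep

/-- `A` is a topological minor of `B`: some subdivision of `A` is isomorphic to
a subgraph of `B`. -/
def IsTopMinorOf (A B : BGraph) : Prop :=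
  ∃ A' : BGraph, IsGraphSubdivision A A' ∧
    ∃ f : A'.V → B.V, Function.Injective f ∧ ∀ x y, A'.G.Adj x y → B.G.Adj (f x) (f y)

/-- The constraint graph of a pattern: vertices are the parts, with an edge
between two parts whenever a negative edge joins them. -/
def CGraph (P : Pattern) : SimpleGraph (Quot P.sim) where
  Adj a b := a ≠ b ∧ ∃ x y : P.X, Quot.mk _ x = a ∧ Quot.mk _ y = b ∧ P.neg x y
  symm := by
    refine ⟨?_⟩
    rintro a b ⟨hab, x, y, hx, hy, hneg⟩
    exact ⟨hab.symm, y, x, hy, hx, P.neg_symm hneg⟩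
  loopless := ⟨fun a h => h.1 rfl⟩

/-- The constraint graph of a binary CSP instance: variables are vertices, with
an edge between `u` and `v` whenever the constraint `R u v` is non-trivial. -/
def cgraphI (I : CSPInstance) : SimpleGraph I.V where
  Adj u v := u ≠ v ∧ ∃ (a : I.D u) (b : I.D v), ¬ I.R u v a b
  symm := by
    refine ⟨?_⟩
    rintro u v ⟨huv, a, b, hab⟩
    exact ⟨huv.symm, b, a, fun hr => hab (I.symmR _ _ _ _ hr)⟩
  loopless := ⟨fun u h => h.1 rfl⟩


def Shape (n : ℕ) (i : ZMod n) (b : Bool) (j : ZMod n) (c : Bool) : Prop :=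
  (b = true ∧ c = false ∧ j = i + 1) ∨ (b = false ∧ c = true ∧ i = j + 1)

instance {n : ℕ} (i : ZMod n) (b : Bool) (j : ZMod n) (c : Bool) : Decidable (Shape n i b j c) := by
  unfold Shape; infer_instance

def FullCyc (n : ℕ) (P : Pattern) : Prop :=
  ∃ f : ZMod n × Bool → P.X, Function.Bijective f ∧
    (∀ i b j c, P.sim (f (i,b)) (f (j,c)) ↔ i = j) ∧
    (∀ i b j c, P.neg (f (i,b)) (f (j,c)) ↔ Shape n i b j c) ∧
    (∀ x y, ¬ P.pos x y)

def vtx (i : ZMod 3) : Fin 3 := ⟨i.val, ZMod.val_lt i⟩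

lemma vtx_ne_succ (i : ZMod 3) : vtx i ≠ vtx (i + 1) := by revert i; decide

def f3 : ZMod 3 × Bool → (PatG (⊤ : SimpleGraph (Fin 3))).X :=
  fun p =>
    if p.2 then
      ⟨⟨s(vtx p.1, vtx (p.1 + 1)), (SimpleGraph.mem_edgeSet _).mpr (vtx_ne_succ p.1)⟩,
        ⟨vtx p.1, Sym2.mem_mk_left _ _⟩⟩
    else
      ⟨⟨s(vtx (p.1 - 1), vtx p.1),
        (SimpleGraph.mem_edgeSet _).mpr (by have := vtx_ne_succ (p.1 - 1); simpa using this)⟩,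
        ⟨vtx p.1, Sym2.mem_mk_right _ _⟩⟩

instance : Fintype (PatG (⊤ : SimpleGraph (Fin 3))).X := by unfold PatG; infer_instance
instance : DecidableEq (PatG (⊤ : SimpleGraph (Fin 3))).X := by unfold PatG; infer_instance

lemma fullCyc_base : FullCyc 3 (PatG (⊤ : SimpleGraph (Fin 3))) := by
  refine ⟨f3, ?_, ?_, ?_, ?_⟩
  · rw [Fintype.bijective_iff_injective_and_card]
    constructor
    · decide
    · decide
  · show ∀ i b j c, (f3 (i,b)).2.1 = (f3 (j,c)).2.1 ↔ i = j
    decide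
  · show ∀ i b j c, ((f3 (i,b)).1 = (f3 (j,c)).1 ∧ (f3 (i,b)).2.1 ≠ (f3 (j,c)).2.1) ↔ Shape 3 i b j c
    decide
  · intro x y h
    exact h

lemma zl_cast_inj {n : ℕ} (hn : 0 < n) {m m' : ℕ} (hm : m < n) (hm' : m' < n) :
    ((m : ℕ) : ZMod n) = ((m' : ℕ) : ZMod n) ↔ m = m' := by
  rw [ZMod.natCast_eq_natCast_iff]
  unfold Nat.ModEq
  rw [Nat.mod_eq_of_lt hm, Nat.mod_eq_of_lt hm']

lemma zl_succ {n : ℕ} (hn : 0 < n) {m m' : ℕ} (hm : m < n) (hm' : m' < n) :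
    ((m' : ℕ) : ZMod n) = ((m : ℕ) : ZMod n) + 1 ↔ (m' = m + 1 ∨ (m = n - 1 ∧ m' = 0)) := by
  have h1 : ((m : ℕ) : ZMod n) + 1 = ((m + 1 : ℕ) : ZMod n) := by push_cast; ring
  rw [h1, ZMod.natCast_eq_natCast_iff]
  unfold Nat.ModEq
  rw [Nat.mod_eq_of_lt hm']
  rcases Nat.lt_or_ge (m + 1) n with h | h
  · rw [Nat.mod_eq_of_lt h]
    constructor
    · intro he; left; exact he
    · rintro (he | ⟨h2, h3⟩) <;> omega
  · have hmn : m + 1 = n := by omega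
    rw [hmn, Nat.mod_self]
    constructor
    · intro he; right; omega
    · rintro (he | ⟨h2, h3⟩) <;> omega

lemma zl_neg_one {n : ℕ} (hn : 0 < n) : (((n - 1 : ℕ)) : ZMod n) = -1 := by
  have h : (((n - 1 : ℕ)) : ZMod n) + 1 = 0 := by
    rw [show (1 : ZMod n) = ((1 : ℕ) : ZMod n) by norm_num, ← Nat.cast_add,
      show n - 1 + 1 = n by omega, ZMod.natCast_self]
  linear_combination h

lemma zl_val_natCast {n : ℕ} [NeZero n] (j : ZMod n) : ((j.val : ℕ) : ZMod n) = j :=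
  ZMod.natCast_rightInverse j

lemma zl_val_add_one {n : ℕ} [NeZero n] [Fact (1 < n)] (j : ZMod n) :
    (j + 1).val = (j.val + 1) % n := by
  rw [ZMod.val_add, ZMod.val_one]

/-- Cyclic sequence witnessing a cycle in a graph. -/
def HasCyc {V : Type} (G : SimpleGraph V) : Prop :=
  ∃ n : ℕ, 3 ≤ n ∧ ∃ F : ZMod n → V, Function.Injective F ∧ ∀ i, G.Adj (F i) (F (i + 1))

lemma zmod_one_ne_zero {n : ℕ} (hn : 3 ≤ n) : (1 : ZMod n) ≠ 0 := by
  haveI : NeZero n := ⟨by omega⟩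
  intro h
  have h' : ((1 : ℕ) : ZMod n) = 0 := by simpa using h
  rw [ZMod.natCast_eq_zero_iff] at h'
  have := Nat.le_of_dvd (by norm_num) h'; omega

lemma zmod_two_ne_zero {n : ℕ} (hn : 3 ≤ n) : (2 : ZMod n) ≠ 0 := by
  haveI : NeZero n := ⟨by omega⟩
  intro h
  have h' : ((2 : ℕ) : ZMod n) = 0 := by simpa using h
  rw [ZMod.natCast_eq_zero_iff] at h'
  have := Nat.le_of_dvd (by norm_num) h'; omega

lemma zmod_self_ne_add_one {n : ℕ} (hn : 3 ≤ n) (i : ZMod n) : i ≠ i + 1 := by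
  intro h
  have : (1 : ZMod n) = 0 := by linear_combination -h
  exact zmod_one_ne_zero hn this

section chain
variable {V : Type} (G : SimpleGraph V) {n : ℕ} (F : ZMod n → V)

/-- A walk `F k → F (k+1) → ... → F n` built from a cyclic adjacency sequence. -/
def chainW (hadj : ∀ i, G.Adj (F i) (F (i + 1))) :
    (m : ℕ) → (k : ℕ) → k + m = n → G.Walk (F (k : ZMod n)) (F (n : ZMod n))
  | 0, k, h => SimpleGraph.Walk.nil.copy rfl
      (congrArg (fun t : ℕ => F (t : ZMod n)) (by omega))
  | (m+1), k, h =>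
      SimpleGraph.Walk.cons
        (by have := hadj (k : ZMod n); push_cast at this ⊢; exact this)
        (chainW hadj m (k+1) (by omega))

lemma chainW_length (hadj : ∀ i, G.Adj (F i) (F (i + 1))) :
    ∀ (m k : ℕ) (h : k + m = n), (chainW G F hadj m k h).length = m := by
  intro m
  induction m with
  | zero => intro k h; simp [chainW]
  | succ m ih => intro k h; simp [chainW, ih]

lemma chainW_support (hadj : ∀ i, G.Adj (F i) (F (i + 1))) :
    ∀ (m k : ℕ) (h : k + m = n),
      (chainW G F hadj m k h).support = (List.range (m+1)).map (fun t : ℕ => F ((k + t : ℕ) : ZMod n)) := by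
  intro m
  induction m with
  | zero => intro k h; simp [chainW, List.range_succ]
  | succ m ih =>
    intro k h
    rw [chainW, SimpleGraph.Walk.support_cons, ih (k+1) (by omega)]
    conv_rhs => rw [List.range_succ_eq_map]
    rw [List.map_cons, List.map_map]
    refine congrArg₂ List.cons (by norm_num) (List.map_congr_left ?_)
    intro t ht
    simp only [Function.comp_apply]
    have : k + 1 + t = k + (t + 1) := by omega
    rw [this]

end chain

lemma not_acyclic_of_hasCyc {V : Type} {G : SimpleGraph V} (h : HasCyc G) : ¬ G.IsAcyclic := by
  obtain ⟨n, hn, F, hinj, hadj⟩ := h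
  intro hac
  rw [SimpleGraph.isAcyclic_iff_path_unique] at hac
  have h01 : G.Adj (F 0) (F 1) := by simpa using hadj 0
  set p1 : G.Path (F 0) (F 1) := SimpleGraph.Path.singleton h01 with hp1
  have hFn : F ((n : ℕ) : ZMod n) = F 0 := by rw [ZMod.natCast_self]
  have hF1 : F (((1:ℕ) : ZMod n)) = F 1 := by norm_num
  set w2 : G.Walk (F 0) (F 1) :=
    ((chainW G F hadj (n-1) 1 (by omega)).copy hF1 hFn).reverse with hw2
  have hw2len : w2.length = n - 1 := by
    rw [hw2, SimpleGraph.Walk.length_reverse, SimpleGraph.Walk.length_copy, chainW_length]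
  have hw2supp : w2.support.Nodup := by
    rw [hw2, SimpleGraph.Walk.support_reverse, List.nodup_reverse, SimpleGraph.Walk.support_copy,
      chainW_support]
    apply List.Nodup.map_on _ List.nodup_range
    intro x hx y hy hxy
    simp only [List.mem_range] at hx hy
    have h2 : ((1 + x : ℕ) : ZMod n) = ((1 + y : ℕ) : ZMod n) := hinj hxy
    rw [ZMod.natCast_eq_natCast_iff] at h2
    have h3 := Nat.ModEq.add_left_cancel' 1 h2
    unfold Nat.ModEq at h3
    rw [Nat.mod_eq_of_lt (by omega), Nat.mod_eq_of_lt (by omega)] at h3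
    exact h3
  set p2 : G.Path (F 0) (F 1) := ⟨w2, SimpleGraph.Walk.IsPath.mk' hw2supp⟩ with hp2
  have heq := hac p1 p2
  have hlen : (p1 : G.Walk (F 0) (F 1)).length = (p2 : G.Walk (F 0) (F 1)).length := by rw [heq]
  rw [hp1, hp2] at hlen
  simp only [SimpleGraph.Path.singleton, SimpleGraph.Walk.length_cons,
    SimpleGraph.Walk.length_nil] at hlen
  rw [hw2len] at hlen
  omega

lemma walk_support_eq {V : Type} {G : SimpleGraph V} :
    ∀ {u v : V} (p : G.Walk u v),
      p.support = (List.range (p.length + 1)).map p.getVert := by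
  intro u v p
  induction p with
  | nil => simp [List.range_succ]
  | cons h p ih =>
    rw [SimpleGraph.Walk.support_cons, ih, SimpleGraph.Walk.length_cons]
    conv_rhs => rw [List.range_succ_eq_map]
    rw [List.map_cons, List.map_map]
    refine congrArg₂ List.cons (by simp) (List.map_congr_left ?_)
    intro t ht
    simp [SimpleGraph.Walk.getVert_cons_succ]

lemma hasCyc_of_not_acyclic {V : Type} {G : SimpleGraph V} (h : ¬ G.IsAcyclic) : HasCyc G := by
  unfold SimpleGraph.IsAcyclic at h; push_neg at h
  obtain ⟨v, c, hc⟩ := h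
  set n := c.length with hnn
  have hn : 3 ≤ n := hc.three_le_length
  haveI : NeZero n := ⟨by omega⟩
  haveI : Fact (1 < n) := ⟨by omega⟩
  have hvn : c.getVert n = c.getVert 0 := by
    rw [SimpleGraph.Walk.getVert_zero]; exact c.getVert_length
  -- key injectivity on shifted indices
  have htail : c.support.tail = (List.range n).map (fun k => c.getVert (k + 1)) := by
    rw [walk_support_eq c, List.range_succ_eq_map]
    simp [List.map_map, Function.comp]; rfl
  have key : ∀ a b : ℕ, a < n → b < n →
      c.getVert (a + 1) = c.getVert (b + 1) → a = b := by
    have hnd := hc.2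
    rw [htail, List.nodup_map_iff_inj_on List.nodup_range] at hnd
    intro a b ha hb hab
    exact hnd a (List.mem_range.2 ha) b (List.mem_range.2 hb) hab
  refine ⟨n, hn, fun i => c.getVert (if i.val = 0 then n else i.val), ?_, ?_⟩
  · intro i j hij
    have hi := ZMod.val_lt i
    have hj := ZMod.val_lt j
    set a := if i.val = 0 then n else i.val with ha
    set b := if j.val = 0 then n else j.val with hb
    have ha1 : 1 ≤ a ∧ a ≤ n := by rw [ha]; split <;> omega
    have hb1 : 1 ≤ b ∧ b ≤ n := by rw [hb]; split <;> omega
    have : a - 1 = b - 1 := by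
      apply key _ _ (by omega) (by omega)
      have h1 : a - 1 + 1 = a := by omega
      have h2 : b - 1 + 1 = b := by omega
      rw [h1, h2]; exact hij
    have hab : a = b := by omega
    apply ZMod.val_injective
    rw [ha, hb] at hab
    split at hab <;> split at hab <;> omega
  · intro i
    have hi := ZMod.val_lt i
    have hFi : (fun i : ZMod n => c.getVert (if i.val = 0 then n else i.val)) i
        = c.getVert i.val := by
      simp only []
      split
      · next h0 => rw [h0, hvn]
      · rfl
    have hFi1 : (fun i : ZMod n => c.getVert (if i.val = 0 then n else i.val)) (i + 1)
        = c.getVert ((i.val + 1) % n) := by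
      simp only []
      have hv : (i + 1).val = (i.val + 1) % n := by
        rw [ZMod.val_add, ZMod.val_one]
      rw [hv]
      split
      · next h0 =>
        have : i.val + 1 = n := by
          rcases Nat.lt_or_ge (i.val + 1) n with h | h
          · rw [Nat.mod_eq_of_lt h] at h0; omega
          · omega
        rw [this, hvn, Nat.mod_self]
      · rfl
    rw [hFi, hFi1]
    rcases Nat.lt_or_ge (i.val + 1) n with h | h
    · rw [Nat.mod_eq_of_lt h]
      exact c.adj_getVert_succ (by omega)
    · have he : i.val + 1 = n := by omega
      have hadj := c.adj_getVert_succ (i := i.val) (by omega)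
      rw [he, hvn] at hadj
      rw [he, Nat.mod_self]
      exact hadj
lemma fullCyc_step {n : ℕ} {P : Pattern} (hn : 3 ≤ n) (h : FullCyc n P) :
    ∃ u v : P.X, ¬ P.sim u v ∧ FullCyc (n + 1) (SubdivOne P u v) := by
  obtain ⟨f, hbij, hsim, hneg, hpos⟩ := h
  haveI : NeZero n := ⟨by omega⟩
  haveI : NeZero (n + 1) := ⟨by omega⟩
  haveI : Fact (1 < n + 1) := ⟨by omega⟩
  have h0n : 0 < n := by omega
  have hm10 : ((-1 : ZMod n)) ≠ 0 := fun h0 =>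
    zmod_one_ne_zero hn (by linear_combination -h0)
  have hm11 : ((-1 : ZMod n)) ≠ 1 := fun h0 =>
    zmod_two_ne_zero hn (by linear_combination -h0)
  have huv : ¬ P.sim (f (-1, true)) (f (0, false)) := by
    rw [hsim]; exact hm10
  have hneguv : P.neg (f (-1, true)) (f (0, false)) := by
    rw [hneg]; left; exact ⟨rfl, rfl, by ring⟩
  refine ⟨f (-1, true), f (0, false), huv, ?_⟩
  set u := f (-1, true) with hu
  set v := f (0, false) with hv
  have hfeq : ∀ (i : ZMod n) (b : Bool) (i' : ZMod n) (b' : Bool),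
      f (i, b) = f (i', b') ↔ (i = i' ∧ b = b') := by
    intro i b i' b'
    constructor
    · intro hh
      have := hbij.1 hh
      exact ⟨congrArg Prod.fst this, congrArg Prod.snd this⟩
    · rintro ⟨rfl, rfl⟩; rfl
  have hzc : P.sim u u ∧ P.sim v v ∧ P.neg u v :=
    ⟨P.sim_equiv.refl u, P.sim_equiv.refl v, hneguv⟩
  set zc : {p : P.X × P.X // P.sim p.1 u ∧ P.sim p.2 v ∧ P.neg p.1 p.2} := ⟨(u, v), hzc⟩ with hzcdef
  have hzuniq : ∀ w : {p : P.X × P.X // P.sim p.1 u ∧ P.sim p.2 v ∧ P.neg p.1 p.2}, w = zc := by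
    rintro ⟨⟨x, y⟩, hw⟩
    obtain ⟨hxu, hyv, hxy⟩ := hw
    dsimp only at hxu hyv hxy
    obtain ⟨⟨i, b⟩, rfl⟩ := hbij.2 x
    obtain ⟨⟨i', b'⟩, rfl⟩ := hbij.2 y
    have hi1 : i = -1 := (hsim i b (-1) true).mp hxu
    have hi2 : i' = 0 := (hsim i' b' 0 false).mp hyv
    rcases (hneg i b i' b').mp hxy with ⟨hb, hb', _⟩ | ⟨hb, hb', hi⟩
    · subst hb; subst hb'; subst hi1; subst hi2
      exact Subtype.ext rfl
    · exfalso; rw [hi1, hi2] at hi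
      exact hm11 (by linear_combination hi)
  have hpz : ∀ w : PosZ P u v, False := fun w => hpos _ _ w.2.2.2
  set f' : ZMod (n + 1) × Bool → (SubdivOne P u v).X := fun p =>
    if p.1.val < n then Sum.inl (f (((p.1.val : ℕ) : ZMod n), p.2))
    else Sum.inr (Sum.inr (zc, p.2)) with hf'
  have hsplit : ∀ j : ZMod (n + 1), j.val < n ∨ j.val = n := by
    intro j; have := ZMod.val_lt j; omega
  have hflt : ∀ (j : ZMod (n + 1)) (b : Bool), j.val < n →
      f' (j, b) = Sum.inl (f (((j.val : ℕ) : ZMod n), b)) := by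
    intro j b hj; simp only [hf']; exact if_pos hj
  have hfge : ∀ (j : ZMod (n + 1)) (b : Bool), j.val = n →
      f' (j, b) = Sum.inr (Sum.inr (zc, b)) := by
    intro j b hj; simp only [hf']; exact if_neg (by omega)
  have hsucc : ∀ j j' : ZMod (n + 1), j' = j + 1 ↔ j'.val = (j.val + 1) % (n + 1) := by
    intro j j'
    rw [← zl_val_add_one j]
    exact ⟨fun h => by rw [h], fun h => ZMod.val_injective _ h⟩
  have hvinj : ∀ j j' : ZMod (n + 1), j.val = j'.val → j = j' :=
    fun _ _ h => ZMod.val_injective _ h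
  have em1 : ∀ m : ℕ, m < n → (((m : ℕ) : ZMod n) = -1 ↔ m = n - 1) := by
    intro m hm
    rw [← zl_neg_one h0n]
    exact zl_cast_inj h0n hm (by omega)
  have e0 : ∀ m : ℕ, m < n → (((m : ℕ) : ZMod n) = 0 ↔ m = 0) := by
    intro m hm
    rw [show (0 : ZMod n) = ((0 : ℕ) : ZMod n) by norm_num]
    exact zl_cast_inj h0n hm (by omega)
  refine ⟨f', ⟨?_, ?_⟩, ?_, ?_, ?_⟩
  · -- injective
    rintro ⟨j, b⟩ ⟨j', b'⟩ hjj
    rcases hsplit j with hj | hj <;> rcases hsplit j' with hj' | hj'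
    · rw [hflt j b hj, hflt j' b' hj'] at hjj
      have h1 := (hfeq _ _ _ _).mp (Sum.inl.inj hjj)
      have h2 := (zl_cast_inj h0n hj hj').mp h1.1
      exact Prod.ext (hvinj _ _ h2) h1.2
    · rw [hflt j b hj, hfge j' b' hj'] at hjj; exact absurd hjj (by simp)
    · rw [hfge j b hj, hflt j' b' hj'] at hjj; exact absurd hjj (by simp)
    · rw [hfge j b hj, hfge j' b' hj'] at hjj
      have h1 := Sum.inr.inj (Sum.inr.inj hjj)
      have hb : b = b' := congrArg Prod.snd h1
      have hjeq : j = j' := hvinj _ _ (by rw [hj, hj'])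
      rw [hjeq, hb]
  · -- surjective
    rintro (x | (w | ⟨w, b⟩))
    · obtain ⟨⟨i, b⟩, rfl⟩ := hbij.2 x
      have hiv : i.val < n := ZMod.val_lt i
      have hjv : ((i.val : ℕ) : ZMod (n + 1)).val = i.val := ZMod.val_cast_of_lt (by omega)
      refine ⟨(((i.val : ℕ) : ZMod (n + 1)), b), ?_⟩
      rw [hflt _ _ (by rw [hjv]; exact hiv), hjv, zl_val_natCast]
    · exact (hpz w).elim
    · have hnv : ((n : ℕ) : ZMod (n + 1)).val = n := ZMod.val_cast_of_lt (by omega)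
      refine ⟨(((n : ℕ) : ZMod (n + 1)), b), ?_⟩
      rw [hfge _ _ hnv, hzuniq w]
      rfl
  · -- sim iff
    intro j b j' c
    rcases hsplit j with hj | hj <;> rcases hsplit j' with hj' | hj'
    · rw [hflt j b hj, hflt j' c hj']
      show P.sim _ _ ↔ _
      rw [hsim, zl_cast_inj h0n hj hj']
      exact ⟨fun h => hvinj _ _ h, fun h => by rw [h]⟩
    · rw [hflt j b hj, hfge j' c hj']
      show False ↔ _
      constructor
      · intro h; exact h.elim
      · intro h; subst h; omega
    · rw [hfge j b hj, hflt j' c hj']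
      show False ↔ _
      constructor
      · intro h; exact h.elim
      · intro h; subst h; omega
    · rw [hfge j b hj, hfge j' c hj']
      show True ↔ _
      exact ⟨fun _ => hvinj _ _ (by omega), fun _ => trivial⟩
  · -- neg iff
    intro j b j' c
    rcases hsplit j with hj | hj <;> rcases hsplit j' with hj' | hj'
    · rw [hflt j b hj, hflt j' c hj']
      show (P.neg _ _ ∧ ¬((P.sim _ u ∧ P.sim _ v) ∨ (P.sim _ v ∧ P.sim _ u))) ↔ _
      rw [hu, hv]
      simp only [hneg, hsim]
      simp only [Shape, zl_succ h0n hj hj', zl_succ h0n hj' hj,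
        em1 _ hj, em1 _ hj', e0 _ hj, e0 _ hj', hsucc j j', hsucc j' j]
      rw [Nat.mod_eq_of_lt (by omega : j.val + 1 < n + 1),
        Nat.mod_eq_of_lt (by omega : j'.val + 1 < n + 1)]
      cases b <;> cases c <;> simp [-ZMod.val_eq_zero] <;> omega
    · rw [hflt j b hj, hfge j' c hj']
      show ((c = false ∧ _ = _) ∨ (c = true ∧ _ = _)) ↔ _
      have hz1 : zc.1.1 = u := rfl
      have hz2 : zc.1.2 = v := rfl
      rw [hz1, hz2, hu, hv]
      simp only [hfeq, Shape, em1 _ hj, e0 _ hj, hsucc j j', hsucc j' j]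
      rw [Nat.mod_eq_of_lt (by omega : j.val + 1 < n + 1), hj']
      rw [Nat.mod_self]
      cases b <;> cases c <;> simp [-ZMod.val_eq_zero] <;> omega
    · rw [hfge j b hj, hflt j' c hj']
      show ((b = false ∧ _ = _) ∨ (b = true ∧ _ = _)) ↔ _
      have hz1 : zc.1.1 = u := rfl
      have hz2 : zc.1.2 = v := rfl
      rw [hz1, hz2, hu, hv]
      simp only [hfeq, Shape, em1 _ hj', e0 _ hj', hsucc j j', hsucc j' j]
      rw [Nat.mod_eq_of_lt (by omega : j'.val + 1 < n + 1), hj]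
      rw [Nat.mod_self]
      cases b <;> cases c <;> simp [-ZMod.val_eq_zero] <;> omega
    · rw [hfge j b hj, hfge j' c hj']
      show False ↔ _
      simp only [Shape, hsucc j j', hsucc j' j, hj, hj', Nat.mod_self]
      cases b <;> cases c <;> simp [-ZMod.val_eq_zero] <;> omega
  · -- no pos
    rintro (x | (w | w)) (y | (w' | w')) hp
    · exact hpos _ _ hp.1
    · exact hpz w'
    · exact hp
    · exact hpz w
    · exact hp
    · exact hp
    · exact hp
    · exact hp
    · exact hp
lemma subdiv_fullCyc (n : ℕ) (hn : 3 ≤ n) :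
    ∃ P' : Pattern, IsSubdivision (PatG (⊤ : SimpleGraph (Fin 3))) P' ∧ FullCyc n P' := by
  induction n, hn using Nat.le_induction with
  | base => exact ⟨_, Relation.ReflTransGen.refl, fullCyc_base⟩
  | succ n hn ih =>
    obtain ⟨P', hsub, hfc⟩ := ih
    obtain ⟨u, v, huv, hfc'⟩ := fullCyc_step hn hfc
    exact ⟨SubdivOne P' u v, hsub.tail ⟨u, v, huv, rfl⟩, hfc'⟩

lemma TM_of_hasCyc (I : CSPInstance) (h : HasCyc (cgraphI I)) :
    TM (PatG (⊤ : SimpleGraph (Fin 3))) (Pat I) := by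
  obtain ⟨n, hn, F, hinj, hadj⟩ := h
  obtain ⟨P', hsub, f, hbij, hsim, hneg, hpos⟩ := subdiv_fullCyc n hn
  refine ⟨P', hsub, ?_⟩
  -- choose witnessing pairs for each edge of the cycle
  have hpt : ∀ i : ZMod n, ∃ p : (Pat I).X × (Pat I).X,
      p.1.1 = F i ∧ p.2.1 = F (i + 1) ∧ (Pat I).neg p.1 p.2 := by
    intro i
    obtain ⟨hne, a, b, hR⟩ : F i ≠ F (i + 1) ∧ ∃ (a : I.D (F i)) (b : I.D (F (i + 1))), ¬ I.R (F i) (F (i + 1)) a b := hadj i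
    exact ⟨((⟨F i, a⟩ : Σ v, I.D v), (⟨F (i + 1), b⟩ : Σ v, I.D v)), rfl, rfl, hne, hR⟩
  choose pt hpt1 hpt2 hptn using hpt
  set e := Equiv.ofBijective f hbij with he
  set g : ZMod n × Bool → (Pat I).X := fun p => if p.2 then (pt p.1).1 else (pt (p.1 - 1)).2
    with hg
  set h : P'.X → (Pat I).X := fun x => g (e.symm x) with hh
  have hge : ∀ p, h (f p) = g p := fun p => congrArg g (e.symm_apply_apply p)
  have hgt : ∀ i : ZMod n, g (i, true) = (pt i).1 := fun i => by simp [hg]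
  have hgf : ∀ i : ZMod n, g (i, false) = (pt (i - 1)).2 := fun i => by simp [hg]
  have hgfst : ∀ (i : ZMod n) (b : Bool), (g (i, b)).1 = F i := by
    intro i b
    cases b
    · rw [hgf, hpt2 (i - 1), sub_add_cancel]
    · rw [hgt, hpt1]
  refine ⟨h, ⟨?_, ?_, ?_⟩, ?_⟩
  · -- sim hom
    intro x y hs
    obtain ⟨⟨i, b⟩, rfl⟩ := hbij.2 x
    obtain ⟨⟨j, c⟩, rfl⟩ := hbij.2 y
    have hij : i = j := (hsim i b j c).mp hs
    show (h (f (i, b))).1 = (h (f (j, c))).1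
    rw [hge, hge, hgfst, hgfst, hij]
  · -- pos hom
    intro x y hp
    exact absurd hp (hpos x y)
  · -- neg hom
    intro x y hng
    obtain ⟨⟨i, b⟩, rfl⟩ := hbij.2 x
    obtain ⟨⟨j, c⟩, rfl⟩ := hbij.2 y
    rw [hneg] at hng
    rcases hng with ⟨hb, hc, hj⟩ | ⟨hb, hc, hj⟩
    · subst hb; subst hc; subst hj
      rw [hge, hge, hgt, hgf]
      have h1 : i + 1 - 1 = i := by ring
      rw [h1]
      exact hptn i
    · subst hb; subst hc; subst hj
      rw [hge, hge, hgt, hgf]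
      have h1 : j + 1 - 1 = j := by ring
      rw [h1]
      exact (Pat I).neg_symm (hptn j)
  · -- preserves parts
    intro x y hns
    obtain ⟨⟨i, b⟩, rfl⟩ := hbij.2 x
    obtain ⟨⟨j, c⟩, rfl⟩ := hbij.2 y
    have hij : i ≠ j := fun hh => hns ((hsim i b j c).mpr hh)
    intro hcon
    apply hij
    apply hinj
    have : (h (f (i, b))).1 = (h (f (j, c))).1 := hcon
    rw [hge, hge, hgfst, hgfst] at this
    exact this
def CycIn (n : ℕ) (P : Pattern) : Prop :=
  ∃ f : ZMod n × Bool → P.X,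
    (∀ i b j c, P.sim (f (i, b)) (f (j, c)) ↔ i = j) ∧
    (∀ i, P.neg (f (i, true)) (f (i + 1, false)))

lemma cycIn_of_fullCyc {n : ℕ} {P : Pattern} (h : FullCyc n P) : CycIn n P := by
  obtain ⟨f, _, hsim, hneg, _⟩ := h
  exact ⟨f, hsim, fun i => (hneg i true (i + 1) false).mpr (Or.inl ⟨rfl, rfl, rfl⟩)⟩

lemma cycIn_insert {P : Pattern} {n : ℕ} (hn : 3 ≤ n) (u v : P.X)
    (f : ZMod n × Bool → P.X)
    (hsim : ∀ i b j c, P.sim (f (i, b)) (f (j, c)) ↔ i = j)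
    (hneg : ∀ i, P.neg (f (i, true)) (f (i + 1, false)))
    (hA : P.sim (f (-1, true)) u) (hB : P.sim (f (0, false)) v) :
    CycIn (n + 1) (SubdivOne P u v) := by
  haveI : NeZero n := ⟨by omega⟩
  haveI : NeZero (n + 1) := ⟨by omega⟩
  haveI : Fact (1 < n + 1) := ⟨by omega⟩
  have h0n : 0 < n := by omega
  have hnegm1 : P.neg (f (-1, true)) (f (0, false)) := by
    have := hneg (-1)
    rwa [show (-1 + 1 : ZMod n) = 0 by ring] at this
  have hzc : P.sim (f (-1, true)) u ∧ P.sim (f (0, false)) v ∧ P.neg (f (-1, true)) (f (0, false)) :=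
    ⟨hA, hB, hnegm1⟩
  set zc : {p : P.X × P.X // P.sim p.1 u ∧ P.sim p.2 v ∧ P.neg p.1 p.2} :=
    ⟨(f (-1, true), f (0, false)), hzc⟩ with hzcdef
  set f' : ZMod (n + 1) × Bool → (SubdivOne P u v).X := fun p =>
    if p.1.val < n then Sum.inl (f (((p.1.val : ℕ) : ZMod n), p.2))
    else Sum.inr (Sum.inr (zc, p.2)) with hf'
  have hsplit : ∀ j : ZMod (n + 1), j.val < n ∨ j.val = n := by
    intro j; have := ZMod.val_lt j; omega
  have hflt : ∀ (j : ZMod (n + 1)) (b : Bool), j.val < n →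
      f' (j, b) = Sum.inl (f (((j.val : ℕ) : ZMod n), b)) := by
    intro j b hj; simp only [hf']; exact if_pos hj
  have hfge : ∀ (j : ZMod (n + 1)) (b : Bool), j.val = n →
      f' (j, b) = Sum.inr (Sum.inr (zc, b)) := by
    intro j b hj; simp only [hf']; exact if_neg (by omega)
  have hvinj : ∀ j j' : ZMod (n + 1), j.val = j'.val → j = j' :=
    fun _ _ h => ZMod.val_injective _ h
  have em1 : ∀ m : ℕ, m < n → (((m : ℕ) : ZMod n) = -1 ↔ m = n - 1) := by
    intro m hm
    rw [← zl_neg_one h0n]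
    exact zl_cast_inj h0n hm (by omega)
  refine ⟨f', ?_, ?_⟩
  · -- sim iff
    intro j b j' c
    rcases hsplit j with hj | hj <;> rcases hsplit j' with hj' | hj'
    · rw [hflt j b hj, hflt j' c hj']
      show P.sim _ _ ↔ _
      rw [hsim, zl_cast_inj h0n hj hj']
      exact ⟨fun h => hvinj _ _ h, fun h => by rw [h]⟩
    · rw [hflt j b hj, hfge j' c hj']
      show False ↔ _
      constructor
      · intro h; exact h.elim
      · intro h; subst h; omega
    · rw [hfge j b hj, hflt j' c hj']
      show False ↔ _
      constructor
      · intro h; exact h.elim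
      · intro h; subst h; omega
    · rw [hfge j b hj, hfge j' c hj']
      show True ↔ _
      exact ⟨fun _ => hvinj _ _ (by omega), fun _ => trivial⟩
  · -- cycle negative edges
    intro j
    have hj1v : (j + 1).val = (j.val + 1) % (n + 1) := zl_val_add_one j
    rcases hsplit j with hj | hj
    · rcases Nat.lt_or_ge (j.val + 1) n with hj2 | hj2
      · -- both old
        have hj1 : (j + 1).val = j.val + 1 := by
          rw [hj1v, Nat.mod_eq_of_lt (by omega)]
        rw [hflt j true hj, hflt (j + 1) false (by omega)]
        show P.neg _ _ ∧ ¬ _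
        constructor
        · have hcast : (((j + 1).val : ℕ) : ZMod n) = ((j.val : ℕ) : ZMod n) + 1 := by
            rw [hj1]; push_cast; ring
          rw [hcast]
          exact hneg _
        · rintro (⟨h1, h2⟩ | ⟨h1, h2⟩)
          · -- f(a,true) ~ u and f(a+1,false) ~ v with a ≠ -1
            have ha : ((j.val : ℕ) : ZMod n) = -1 :=
              (hsim _ true (-1) true).mp (P.sim_equiv.trans h1 (P.sim_equiv.symm hA))
            rw [em1 _ hj] at ha
            omega
          · have ha : ((j.val : ℕ) : ZMod n) = 0 :=
              (hsim _ true 0 false).mp (P.sim_equiv.trans h1 (P.sim_equiv.symm hB))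
            have hb' : (((j + 1).val : ℕ) : ZMod n) = -1 :=
              (hsim _ false (-1) true).mp (P.sim_equiv.trans h2 (P.sim_equiv.symm hA))
            rw [hj1] at hb'
            have : ((j.val : ℕ) : ZMod n) + 1 = -1 := by
              rw [← hb']; push_cast; ring
            rw [ha] at this
            exact zmod_two_ne_zero hn (by linear_combination this)
      · -- j.val = n - 1 : edge into the new part
        have hjn : j.val = n - 1 := by omega
        have hj1 : (j + 1).val = n := by
          rw [hj1v, show j.val + 1 = n by omega, Nat.mod_eq_of_lt (by omega)]
        rw [hflt j true hj, hfge (j + 1) false hj1]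
        show (_ ∧ _) ∨ (_ ∧ _)
        left
        refine ⟨rfl, ?_⟩
        show f _ = zc.1.1
        have hcast : ((j.val : ℕ) : ZMod n) = -1 := (em1 _ hj).mpr hjn
        rw [hcast]
    · -- j.val = n : edge out of the new part
      have hj1 : (j + 1).val = 0 := by
        rw [hj1v, hj, Nat.mod_self]
      rw [hfge j true hj, hflt (j + 1) false (by omega)]
      show (_ ∧ _) ∨ (_ ∧ _)
      right
      constructor
      · rfl
      · show f _ = zc.1.2
        have : (((j + 1).val : ℕ) : ZMod n) = 0 := by rw [hj1]; norm_num
        rw [this]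
lemma cycIn_step {P Q : Pattern} {n : ℕ} (hn : 3 ≤ n) (hPQ : SubdivStep P Q)
    (h : CycIn n P) : CycIn n Q ∨ CycIn (n + 1) Q := by
  obtain ⟨u, v, huv, rfl⟩ := hPQ
  obtain ⟨f, hsim, hneg⟩ := h
  by_cases hc : ∃ i : ZMod n,
      (P.sim (f (i, true)) u ∧ P.sim (f (i + 1, false)) v) ∨
      (P.sim (f (i, true)) v ∧ P.sim (f (i + 1, false)) u)
  · right
    obtain ⟨i0, hi0⟩ := hc
    rcases hi0 with ⟨h1, h2⟩ | ⟨h1, h2⟩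
    · refine cycIn_insert hn u v (fun p => f (p.1 + (i0 + 1), p.2)) ?_ ?_ ?_ ?_
      · intro i b j c
        show P.sim (f _) (f _) ↔ _
        rw [hsim]
        constructor
        · intro hh; linear_combination hh
        · intro hh; rw [hh]
      · intro i
        show P.neg (f (i + (i0 + 1), true)) (f (i + 1 + (i0 + 1), false))
        have := hneg (i + (i0 + 1))
        rwa [show (i + (i0 + 1) + 1 : ZMod n) = i + 1 + (i0 + 1) by ring] at this
      · show P.sim (f (-1 + (i0 + 1), true)) u
        rwa [show (-1 + (i0 + 1) : ZMod n) = i0 by ring]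
      · show P.sim (f (0 + (i0 + 1), false)) v
        rwa [show (0 + (i0 + 1) : ZMod n) = i0 + 1 by ring]
    · refine cycIn_insert hn u v (fun p => f (i0 - p.1, !p.2)) ?_ ?_ ?_ ?_
      · intro i b j c
        show P.sim (f _) (f _) ↔ _
        rw [hsim]
        constructor
        · intro hh; linear_combination -hh
        · intro hh; rw [hh]
      · intro i
        show P.neg (f (i0 - i, false)) (f (i0 - (i + 1), true))
        have := hneg (i0 - (i + 1))
        rw [show (i0 - (i + 1) + 1 : ZMod n) = i0 - i by ring] at this
        exact P.neg_symm this
      · show P.sim (f (i0 - (-1), false)) u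
        rw [show (i0 - (-1) : ZMod n) = i0 + 1 by ring]
        exact h2
      · show P.sim (f (i0 - 0, true)) v
        rw [show (i0 - 0 : ZMod n) = i0 by ring]
        exact h1
  · left
    refine ⟨fun p => Sum.inl (f p), ?_, ?_⟩
    · intro i b j c
      show P.sim _ _ ↔ _
      exact hsim i b j c
    · intro i
      show P.neg _ _ ∧ ¬ _
      exact ⟨hneg i, fun hcc => hc ⟨i, hcc⟩⟩

lemma cycIn_SP {n : ℕ} {P Q : Pattern} (h : CycIn n P) (hsp : SP P Q) : CycIn n Q := by
  obtain ⟨f, hsim, hneg⟩ := h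
  obtain ⟨g, ⟨hgs, _, hgn⟩, hgp⟩ := hsp
  refine ⟨fun p => g (f p), ?_, fun i => hgn _ _ (hneg i)⟩
  intro i b j c
  constructor
  · intro hh
    by_contra hij
    exact hgp _ _ (fun hs => hij ((hsim i b j c).mp hs)) hh
  · intro hh
    exact hgs _ _ ((hsim i b j c).mpr hh)

lemma subdiv_cycIn {P' : Pattern}
    (hsub : IsSubdivision (PatG (⊤ : SimpleGraph (Fin 3))) P') :
    ∃ n, 3 ≤ n ∧ CycIn n P' := by
  induction hsub with
  | refl => exact ⟨3, le_refl 3, cycIn_of_fullCyc fullCyc_base⟩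
  | tail hsub hstep ih =>
    obtain ⟨n, hn, hcyc⟩ := ih
    rcases cycIn_step hn hstep hcyc with h | h
    · exact ⟨n, hn, h⟩
    · exact ⟨n + 1, by omega, h⟩

lemma hasCyc_of_TM (I : CSPInstance) (h : TM (PatG (⊤ : SimpleGraph (Fin 3))) (Pat I)) :
    HasCyc (cgraphI I) := by
  obtain ⟨P', hsub, hsp⟩ := h
  obtain ⟨n, hn, hcyc⟩ := subdiv_cycIn hsub
  obtain ⟨f, hsim, hneg⟩ := cycIn_SP hcyc hsp
  refine ⟨n, hn, fun i => (f (i, true)).1, ?_, ?_⟩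
  · intro i j hij
    by_contra hne
    exact (fun hs => hne ((hsim i true j true).mp hs)) hij
  · intro i
    have hfst : (f (i + 1, false)).1 = (f (i + 1, true)).1 :=
      (hsim (i + 1) false (i + 1) true).mpr rfl
    have hn1 : (f (i, true)).1 ≠ (f (i + 1, false)).1 ∧
        ¬ I.R (f (i, true)).1 (f (i + 1, false)).1 (f (i, true)).2 (f (i + 1, false)).2 :=
      hneg i
    obtain ⟨hne, hR⟩ := hn1
    rcases hfy : f (i + 1, false) with ⟨yv, yd⟩
    rw [hfy] at hne hR hfst
    dsimp only at hne hR hfst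
    subst hfst
    exact (show _ ∧ _ from ⟨hne, (f (i, true)).2, yd, hR⟩)

/-- A binary CSP instance is acyclic iff the pattern of the
3-cycle `C3` does not occur as a topological minor in its pattern. -/
theorem acyclic_iff_not_TM_PatG_C3 (I : CSPInstance) :
    (cgraphI I).IsAcyclic ↔ ¬ TM (PatG (⊤ : SimpleGraph (Fin 3))) (Pat I) := by
  constructor
  · intro hac hTM
    exact not_acyclic_of_hasCyc (hasCyc_of_TM I hTM) hac
  · intro hTM
    by_contra hac
    exact hTM (TM_of_hasCyc I (hasCyc_of_not_acyclic hac))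
end

section
/- Let f : D^k → D be a k-ary operation on a finite domain D and let I be a binary CSP instance over D. Then every constraint relation of I admits f as a polymorphism if and only if the augmented pattern P_R (two parts {p_1,...,p_{k+1}} and {q_1,...,q_{k+1}}, positive edges (p_i,q_i) for i ≤ k, a negative edge (p_{k+1},q_{k+1}), and R = {(p_1,...,p_{k+1}), (q_1,...,q_{k+1})}) does not occur as a sub-pattern in the augmented pattern (Pat(I), Rel_f(I)). -/
/-- A binary CSP instance over a fixed domain `D`. -/
structure FDCSP (D : Type) where
  V : Type
  finV : Finite V
  finD : Finite D
  R : V → V → D → D → Prop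
  symmR : ∀ u v a b, R u v a b → R v u b a

/-- The pattern of a fixed-domain instance. -/
def PatF {D : Type} (I : FDCSP D) : Pattern where
  X := I.V × D
  sim := fun x y => x.1 = y.1
  pos := fun x y => x.1 ≠ y.1 ∧ I.R x.1 y.1 x.2 y.2
  neg := fun x y => x.1 ≠ y.1 ∧ ¬ I.R x.1 y.1 x.2 y.2
  sim_equiv := ⟨fun _ => rfl, Eq.symm, Eq.trans⟩
  pos_symm := fun _ _ h => ⟨Ne.symm h.1, I.symmR _ _ _ _ h.2⟩
  neg_symm := fun _ _ h => ⟨Ne.symm h.1, fun hr => h.2 (I.symmR _ _ _ _ hr)⟩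
  sim_pos := fun _ _ h hp => hp.1 h
  sim_neg := fun _ _ h hn => hn.1 h

/-- An augmented pattern: a pattern together with an `m`-ary relation on its
points. -/
structure APattern (m : ℕ) where
  P : Pattern
  R : Set (Fin m → P.X)

/-- Sub-pattern occurrence of augmented patterns: a part-preserving
homomorphism mapping tuples of the relation into tuples of the target
relation. -/
def ASP {m : ℕ} (A B : APattern m) : Prop :=
  ∃ h : A.P.X → B.P.X, IsHom A.P B.P h ∧ PreservesParts A.P B.P h ∧
    ∀ t ∈ A.R, h ∘ t ∈ B.R

/-- The augmented pattern `P_R` of Theorem `languageasForbSP`: two parts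
`p_0,…,p_k` and `q_0,…,q_k`, positive edges `(p_i, q_i)` for `i < k`, a
negative edge `(p_k, q_k)`, with `R` consisting of the two tuples
`(p_0,…,p_k)` and `(q_0,…,q_k)`. -/
def polyPattern (k : ℕ) : APattern (k + 1) where
  P := { X := Bool × Fin (k + 1)
         sim := fun x y => x.1 = y.1
         pos := fun x y => x.1 ≠ y.1 ∧ x.2 = y.2 ∧ x.2 ≠ Fin.last k
         neg := fun x y => x.1 ≠ y.1 ∧ x.2 = y.2 ∧ x.2 = Fin.last k
         sim_equiv := ⟨fun _ => rfl, Eq.symm, Eq.trans⟩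
         pos_symm := fun _ _ h => ⟨Ne.symm h.1, h.2.1.symm, h.2.1 ▸ h.2.2⟩
         neg_symm := fun _ _ h => ⟨Ne.symm h.1, h.2.1.symm, h.2.1 ▸ h.2.2⟩
         sim_pos := fun _ _ h hp => hp.1 h
         sim_neg := fun _ _ h hn => hn.1 h }
  R := {fun i => (false, i), fun i => (true, i)}

/-- The relation `Rel_f(I)` on the points of `PatF I`: tuples of values of a
single variable whose last coordinate is the image under `f` of the first `k`
coordinates. -/
def RelF {D : Type} (I : FDCSP D) (k : ℕ) (f : (Fin k → D) → D) :
    Set (Fin (k + 1) → I.V × D) :=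
  { t | (∃ v : I.V, ∀ i, (t i).1 = v) ∧
        (t (Fin.last k)).2 = f (fun i => (t i.castSucc).2) }

/-- `f` is a polymorphism of every constraint relation of `I` iff
the augmented pattern `P_R` does not occur as a sub-pattern in the augmented
pattern `(Pat(I), Rel_f(I))`. -/
theorem polymorphism_iff_not_ASP {D : Type} (k : ℕ) (f : (Fin k → D) → D)
    (I : FDCSP D) :
    (∀ u v : I.V, u ≠ v → ∀ as bs : Fin k → D,
        (∀ i, I.R u v (as i) (bs i)) → I.R u v (f as) (f bs)) ↔
      ¬ ASP (polyPattern k) ⟨PatF I, RelF I k f⟩ := by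
  constructor
  · rintro hpoly ⟨h, ⟨hsim, hpos, hneg⟩, hparts, hR⟩
    obtain ⟨⟨u, hu⟩, hfu⟩ := hR (fun i => (false, i)) (Or.inl rfl)
    obtain ⟨⟨v, hv⟩, hfv⟩ := hR (fun i => (true, i)) (Or.inr rfl)
    simp only [Function.comp] at hu hv hfu hfv
    have Hf : ∀ j, h (false, j) = (u, (h (false, j)).2) := fun j => Prod.ext (hu j) rfl
    have Hv : ∀ j, h (true, j) = (v, (h (true, j)).2) := fun j => Prod.ext (hv j) rfl
    have huv : u ≠ v := by
      have := hparts (false, 0) (true, 0) (by simp [polyPattern])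
      intro heq
      apply this
      show (h (false, 0)).1 = (h (true, 0)).1
      rw [hu 0, hv 0, heq]
    set as : Fin k → D := fun i => (h (false, i.castSucc)).2 with has
    set bs : Fin k → D := fun i => (h (true, i.castSucc)).2 with hbs
    have hRi : ∀ i : Fin k, I.R u v (as i) (bs i) := by
      intro i
      have hp := hpos (false, i.castSucc) (true, i.castSucc)
        ⟨by simp, rfl, (Fin.castSucc_lt_last i).ne⟩
      rw [Hf i.castSucc, Hv i.castSucc] at hp
      exact hp.2
    have hn := hneg (false, Fin.last k) (true, Fin.last k)
      ⟨by simp, rfl, rfl⟩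
    rw [Hf (Fin.last k), Hv (Fin.last k)] at hn
    apply hn.2
    have e1 : (h (false, Fin.last k)).2 = f as := hfu
    have e2 : (h (true, Fin.last k)).2 = f bs := hfv
    rw [e1, e2]
    exact hpoly u v huv as bs hRi
  · intro hASP u v huv as bs hRi
    by_contra hnR
    apply hASP
    set A : Fin (k + 1) → D := Fin.lastCases (f as) as with hA
    set B : Fin (k + 1) → D := Fin.lastCases (f bs) bs with hB
    refine ⟨fun x => (cond x.1 v u, cond x.1 (B x.2) (A x.2)), ⟨?_, ?_, ?_⟩, ?_, ?_⟩
    · rintro ⟨b1, i⟩ ⟨b2, j⟩ hs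
      have : b1 = b2 := hs
      subst this
      rfl
    · rintro ⟨b1, i⟩ ⟨b2, j⟩ ⟨hb, hij, hil⟩
      simp only [polyPattern] at hb hij hil
      cases hij
      obtain ⟨m, rfl⟩ := Fin.exists_castSucc_eq.mpr hil
      have hAm : A m.castSucc = as m := Fin.lastCases_castSucc ..
      have hBm : B m.castSucc = bs m := Fin.lastCases_castSucc ..
      cases b1 <;> cases b2 <;> simp_all
      · exact ⟨huv, hRi m⟩
      · exact ⟨Ne.symm huv, I.symmR _ _ _ _ (hRi m)⟩
    · rintro ⟨b1, i⟩ ⟨b2, j⟩ ⟨hb, hij, hil⟩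
      simp only [polyPattern] at hb hij hil
      cases hij
      subst hil
      have hAl : A (Fin.last k) = f as := Fin.lastCases_last ..
      have hBl : B (Fin.last k) = f bs := Fin.lastCases_last ..
      cases b1 <;> cases b2 <;> simp_all
      · exact ⟨huv, hnR⟩
      · exact ⟨Ne.symm huv, fun hr => hnR (I.symmR _ _ _ _ hr)⟩
    · rintro ⟨b1, i⟩ ⟨b2, j⟩ hns heq
      apply hns
      show b1 = b2
      have hcc : cond b1 v u = cond b2 v u := heq
      cases b1 <;> cases b2 <;> simp_all
    · rintro t ht
      rcases ht with ht | ht <;> subst ht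
      · refine ⟨⟨u, fun i => rfl⟩, ?_⟩
        show A (Fin.last k) = f fun i => A i.castSucc
        rw [hA]
        simp [Fin.lastCases_last, Fin.lastCases_castSucc]
      · refine ⟨⟨v, fun i => rfl⟩, ?_⟩
        show B (Fin.last k) = f fun i => B i.castSucc
        rw [hB]
        simp [Fin.lastCases_last, Fin.lastCases_castSucc]
end

section
/- The Pivot(k) pattern occurs as a sub-pattern in every subdivision of itself; hence ForbSP(Pivot(k)) = ForbTM(Pivot(k)). -/
/-- The pattern `Pivot(k)`: a star pattern with three branches each consisting
of `k` negative edges.  The central part has two points: the merged point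
`Sum.inl false` (meeting branches `0` and `1`) and `Sum.inl true` (meeting
branch `2`).  The point `Sum.inr (i, j, b)` is the point of the `j`-th part of
branch `i` on the side nearer the centre (`b = false`) or farther (`b = true`). -/
def PivotPattern (k : ℕ) : Pattern where
  X := Bool ⊕ (Fin 3 × Fin k × Bool)
  sim := fun a b => match a, b with
    | .inl _, .inl _ => True
    | .inr x, .inr y => x.1 = y.1 ∧ x.2.1 = y.2.1
    | _, _ => False
  pos := fun _ _ => False
  neg := fun a b => match a, b with
    | .inl c, .inr x =>
        ((c = false ∧ x.1.val ≤ 1) ∨ (c = true ∧ x.1.val = 2)) ∧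
          x.2.1.val = 0 ∧ x.2.2 = false
    | .inr x, .inl c =>
        ((c = false ∧ x.1.val ≤ 1) ∨ (c = true ∧ x.1.val = 2)) ∧
          x.2.1.val = 0 ∧ x.2.2 = false
    | .inr x, .inr y => x.1 = y.1 ∧
        ((y.2.1.val = x.2.1.val + 1 ∧ x.2.2 = true ∧ y.2.2 = false) ∨
         (x.2.1.val = y.2.1.val + 1 ∧ y.2.2 = true ∧ x.2.2 = false))
    | _, _ => False
  sim_equiv := by
    refine ⟨?_, ?_, ?_⟩
    · rintro (c | x)
      · trivial
      · exact ⟨rfl, rfl⟩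
    · rintro (c | x) (d | y) h
      · trivial
      · exact h.elim
      · exact h.elim
      · exact ⟨h.1.symm, h.2.symm⟩
    · rintro (c | x) (d | y) (e | z) h1 h2
      · trivial
      · exact h2.elim
      · exact h1.elim
      · exact h1.elim
      · exact h1.elim
      · exact h1.elim
      · exact h2.elim
      · exact ⟨h1.1.trans h2.1, h1.2.trans h2.2⟩
  pos_symm := fun _ _ h => h.elim
  neg_symm := by
    rintro (c | x) (d | y) h
    · exact h.elim
    · exact h
    · exact h
    · exact ⟨h.1.symm, h.2.symm⟩
  sim_pos := fun _ _ _ hp => hp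
  sim_neg := by
    rintro (c | x) (d | y) h hn
    · exact hn
    · exact h
    · exact h
    · obtain ⟨-, h2⟩ := h
      rcases hn.2 with ⟨h1, -⟩ | ⟨h1, -⟩ <;> rw [h2] at h1 <;> omega

/- Auxiliary lemmas -/

lemma SP_refl (P : Pattern) : SP P P :=
  ⟨id, ⟨fun _ _ h => h, fun _ _ h => h, fun _ _ h => h⟩, fun _ _ h => h⟩

lemma SP_trans {P Q R : Pattern} (h1 : SP P Q) (h2 : SP Q R) : SP P R := by
  obtain ⟨f, ⟨fs, fp, fn⟩, fpp⟩ := h1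
  obtain ⟨g, ⟨gs, gp, gn⟩, gpp⟩ := h2
  exact ⟨g ∘ f, ⟨fun x y hxy => gs _ _ (fs _ _ hxy), fun x y hxy => gp _ _ (fp _ _ hxy),
    fun x y hxy => gn _ _ (fn _ _ hxy)⟩, fun x y hxy => gpp _ _ (fpp _ _ hxy)⟩

lemma pivot_rigid {k : ℕ} {x y x' y' : (PivotPattern k).X}
    (e : (PivotPattern k).neg x y) (e' : (PivotPattern k).neg x' y')
    (hx : (PivotPattern k).sim x x') (hy : (PivotPattern k).sim y y') :
    x = x' ∧ y = y' := by
  rcases x with c | ⟨i, j, b⟩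
  · rcases x' with c' | w
    · rcases y with d | ⟨i2, j2, b2⟩
      · exact e.elim
      · rcases y' with d' | ⟨i2', j2', b2'⟩
        · exact hy.elim
        · obtain ⟨hc, hj0, hb⟩ := e
          obtain ⟨hc', hj0', hb'⟩ := e'
          obtain ⟨hi, hj⟩ := hy
          subst hi hj hb hb'
          refine ⟨?_, rfl⟩
          rcases hc with ⟨rfl, h1⟩ | ⟨rfl, h1⟩ <;> rcases hc' with ⟨rfl, h2⟩ | ⟨rfl, h2⟩ <;>
            first | rfl | (dsimp only at h1 h2; omega)
    · exact hx.elim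
  · rcases x' with c' | ⟨i', j', b'⟩
    · exact hx.elim
    · obtain ⟨hi, hj⟩ := hx
      subst hi hj
      rcases y with d | ⟨i2, j2, b2⟩
      · rcases y' with d' | w
        · obtain ⟨hc, hj0, hb⟩ := e
          obtain ⟨hc', hj0', hb'⟩ := e'
          subst hb hb'
          refine ⟨rfl, ?_⟩
          rcases hc with ⟨rfl, h1⟩ | ⟨rfl, h1⟩ <;> rcases hc' with ⟨rfl, h2⟩ | ⟨rfl, h2⟩ <;>
            first | rfl | (dsimp only at h1 h2; omega)
        · exact hy.elim
      · rcases y' with d' | ⟨i2', j2', b2'⟩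
        · exact hy.elim
        · obtain ⟨hi2, hd⟩ := e
          obtain ⟨hi2', hd'⟩ := e'
          obtain ⟨hy1, hy2⟩ := hy
          subst hi2 hy1 hy2
          rcases hd with ⟨h1, rfl, rfl⟩ | ⟨h1, rfl, rfl⟩ <;>
            rcases hd' with ⟨h2, rfl, rfl⟩ | ⟨h2, rfl, rfl⟩ <;>
            first | exact ⟨rfl, rfl⟩ | (dsimp only at h1 h2 ⊢; omega)
/-- The Pivot point just before position `m` on branch `i0`. -/
def prevPt (k : ℕ) (i0 : Fin 3) (m : Fin k) : (PivotPattern k).X :=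
  if m.val = 0 then Sum.inl (decide (i0.val = 2))
  else Sum.inr (i0, ⟨m.val - 1, Nat.lt_of_le_of_lt (Nat.sub_le _ _) m.isLt⟩, true)

lemma center_decide {i0 : Fin 3} {c : Bool}
    (hc : (c = false ∧ i0.val ≤ 1) ∨ (c = true ∧ i0.val = 2)) :
    c = decide (i0.val = 2) := by
  rcases hc with ⟨rfl, h⟩ | ⟨rfl, h⟩
  · exact (decide_eq_false (by omega)).symm
  · exact (decide_eq_true h).symm

lemma prevPt_neg (k : ℕ) (i0 : Fin 3) (m : Fin k) :
    (PivotPattern k).neg (prevPt k i0 m) (Sum.inr (i0, m, false)) := by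
  unfold prevPt
  by_cases hm : m.val = 0
  · erw [if_pos hm]
    refine ⟨?_, hm, rfl⟩
    by_cases h2 : i0.val = 2
    · exact Or.inr ⟨decide_eq_true h2, h2⟩
    · exact Or.inl ⟨decide_eq_false h2, show i0.val ≤ 1 by omega⟩
  · erw [if_neg hm]
    exact ⟨rfl, Or.inl ⟨show m.val = m.val - 1 + 1 by omega, rfl, rfl⟩⟩

/-- The rerouted map used when one image edge of the pivot gets subdivided. -/
def shiftMap {k : ℕ} {Q : Pattern} {u v : Q.X} (h : (PivotPattern k).X → Q.X)
    (i0 : Fin 3) (m : Fin k) (s : Bool)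
    (z : {p : Q.X × Q.X // Q.sim p.1 u ∧ Q.sim p.2 v ∧ Q.neg p.1 p.2}) :
    (PivotPattern k).X → (SubdivOne Q u v).X
  | Sum.inl c => Sum.inl (h (Sum.inl c))
  | Sum.inr (i, j, b) =>
      if i = i0 ∧ m.val ≤ j.val then
        if j.val = m.val then Sum.inr (Sum.inr (z, cond b (!s) s))
        else Sum.inl (h (Sum.inr (i, ⟨j.val - 1, Nat.lt_of_le_of_lt (Nat.sub_le _ _) j.isLt⟩, b)))
      else Sum.inl (h (Sum.inr (i, j, b)))

lemma shiftMap_inl {k : ℕ} {Q : Pattern} {u v : Q.X} (h : (PivotPattern k).X → Q.X)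
    (i0 : Fin 3) (m : Fin k) (s : Bool) (z) (c : Bool) :
    shiftMap (u := u) (v := v) h i0 m s z (Sum.inl c) = Sum.inl (h (Sum.inl c)) := rfl

lemma shiftMap_inr {k : ℕ} {Q : Pattern} {u v : Q.X} (h : (PivotPattern k).X → Q.X)
    (i0 : Fin 3) (m : Fin k) (s : Bool) (z) (i : Fin 3) (j : Fin k) (b : Bool) :
    shiftMap (u := u) (v := v) h i0 m s z (Sum.inr (i, j, b)) =
      if i = i0 ∧ m.val ≤ j.val then
        if j.val = m.val then Sum.inr (Sum.inr (z, cond b (!s) s))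
        else Sum.inl (h (Sum.inr (i, ⟨j.val - 1, Nat.lt_of_le_of_lt (Nat.sub_le _ _) j.isLt⟩, b)))
      else Sum.inl (h (Sum.inr (i, j, b))) := rfl
lemma step_with_edge {k : ℕ} {Q : Pattern} {u v : Q.X}
    (h : (PivotPattern k).X → Q.X) (hhom : IsHom (PivotPattern k) Q h)
    (hpp : PreservesParts (PivotPattern k) Q h)
    (i0 : Fin 3) (m : Fin k) (s : Bool)
    (z : {p : Q.X × Q.X // Q.sim p.1 u ∧ Q.sim p.2 v ∧ Q.neg p.1 p.2})
    (hnear : (cond s z.1.2 z.1.1) = h (prevPt k i0 m))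
    (hfar : (cond s z.1.1 z.1.2) = h (Sum.inr (i0, m, false))) :
    SP (PivotPattern k) (SubdivOne Q u v) := by
  obtain ⟨hs, hp, hn⟩ := hhom
  have E := Q.sim_equiv
  have hback : ∀ x y : (PivotPattern k).X, Q.sim (h x) (h y) → (PivotPattern k).sim x y := by
    intro x y hq
    by_contra hcon
    exact hpp x y hcon hq
  -- uniqueness of the subdivided edge
  have hkey : ∀ x y, (PivotPattern k).neg x y → Q.sim (h x) u → Q.sim (h y) v →
      x = cond s (Sum.inr (i0, m, false)) (prevPt k i0 m) ∧
      y = cond s (prevPt k i0 m) (Sum.inr (i0, m, false)) := by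
    intro x y e hxu hyv
    have e0 : (PivotPattern k).neg (cond s (Sum.inr (i0, m, false)) (prevPt k i0 m))
        (cond s (prevPt k i0 m) (Sum.inr (i0, m, false))) := by
      cases s
      · exact prevPt_neg k i0 m
      · exact (PivotPattern k).neg_symm (prevPt_neg k i0 m)
    have hA : h (cond s (Sum.inr (i0, m, false)) (prevPt k i0 m)) = z.1.1 := by
      cases s
      · exact hnear.symm
      · exact hfar.symm
    have hB : h (cond s (prevPt k i0 m) (Sum.inr (i0, m, false))) = z.1.2 := by
      cases s
      · exact hfar.symm
      · exact hnear.symm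
    have sx : (PivotPattern k).sim x (cond s (Sum.inr (i0, m, false)) (prevPt k i0 m)) := by
      apply hback
      rw [hA]
      exact E.trans hxu (E.symm z.2.1)
    have sy : (PivotPattern k).sim y (cond s (prevPt k i0 m) (Sum.inr (i0, m, false))) := by
      apply hback
      rw [hB]
      exact E.trans hyv (E.symm z.2.2.1)
    exact pivot_rigid e e0 sx sy
  -- survival of all non-subdivided edges
  have hsurv : ∀ x y, (PivotPattern k).neg x y →
      x ≠ Sum.inr (i0, m, false) → y ≠ Sum.inr (i0, m, false) →
      ¬((Q.sim (h x) u ∧ Q.sim (h y) v) ∨ (Q.sim (h x) v ∧ Q.sim (h y) u)) := by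
    intro x y e hx hy
    rintro (⟨ha, hb⟩ | ⟨ha, hb⟩)
    · obtain ⟨e1, e2⟩ := hkey x y e ha hb
      cases s
      · exact hy e2
      · exact hx e1
    · obtain ⟨e1, e2⟩ := hkey y x ((PivotPattern k).neg_symm e) hb ha
      cases s
      · exact hx e2
      · exact hy e1
  -- connection of the new points
  have hconn : ∀ (x : Q.X) (c : Bool), x = cond c z.1.2 z.1.1 →
      (SubdivOne Q u v).neg (Sum.inl x) (Sum.inr (Sum.inr (z, c))) := by
    intro x c hx
    cases c
    · exact Or.inl ⟨rfl, hx⟩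
    · exact Or.inr ⟨rfl, hx⟩
  have hmap_prev : ∀ p : (PivotPattern k).X, p = prevPt k i0 m →
      h p = cond s z.1.2 z.1.1 := by
    rintro p rfl
    exact hnear.symm
  have hmap_far : ∀ (ii : Fin 3) (jj : Fin k), ii = i0 → jj = m →
      h (Sum.inr (ii, jj, false)) = cond s z.1.1 z.1.2 := by
    rintro _ _ rfl rfl
    exact hfar.symm
  -- similarity is preserved
  have fsim : ∀ x y, (PivotPattern k).sim x y →
      (SubdivOne Q u v).sim (shiftMap h i0 m s z x) (shiftMap h i0 m s z y) := by
    intro x y hxy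
    rcases x with c | ⟨i, j, b⟩ <;> rcases y with c' | ⟨i', j', b'⟩
    · exact hs _ _ hxy
    · exact hxy.elim
    · exact hxy.elim
    · obtain ⟨hi, hj⟩ := hxy
      have hi' : i = i' := hi
      have hj' : j = j' := hj
      subst hi'
      subst hj'
      rw [shiftMap_inr, shiftMap_inr]
      split_ifs with h1 h2
      · trivial
      · exact hs _ _ ⟨rfl, rfl⟩
      · exact hs _ _ ⟨rfl, rfl⟩
  -- negative edges from the centre
  have negA : ∀ (c : Bool) (i : Fin 3) (j : Fin k) (b : Bool),
      (PivotPattern k).neg (Sum.inl c) (Sum.inr (i, j, b)) →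
      (SubdivOne Q u v).neg (shiftMap h i0 m s z (Sum.inl c))
        (shiftMap h i0 m s z (Sum.inr (i, j, b))) := by
    intro c i j b e
    obtain ⟨hc, hj0, hb⟩ := e
    subst hb
    have hj0' : j.val = 0 := hj0
    have hc' : (c = false ∧ i.val ≤ 1) ∨ (c = true ∧ i.val = 2) := hc
    rw [shiftMap_inl, shiftMap_inr]
    by_cases hr : i = i0 ∧ m.val ≤ j.val
    · obtain ⟨hii, hmj⟩ := hr
      subst hii
      rw [if_pos ⟨rfl, hmj⟩, if_pos (show j.val = m.val by omega)]
      refine hconn _ s ?_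
      apply hmap_prev
      unfold prevPt
      erw [if_pos (show m.val = 0 by omega)]
      rw [center_decide hc']
    · rw [if_neg hr]
      have e2 : (PivotPattern k).neg (Sum.inl c) (Sum.inr (i, j, false)) := ⟨hc, hj0, rfl⟩
      refine ⟨hn _ _ e2, hsurv _ _ e2 (by exact Sum.inl_ne_inr) ?_⟩
      intro hcon
      injection hcon with hcon
      injection hcon with h1 hcon2
      injection hcon2 with h2 h3
      exact hr ⟨h1, le_of_eq (congrArg Fin.val h2).symm⟩
  -- negative edges inside a branch
  have negB : ∀ (i : Fin 3) (j1 j2 : Fin k), j2.val = j1.val + 1 →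
      (SubdivOne Q u v).neg (shiftMap h i0 m s z (Sum.inr (i, j1, true)))
        (shiftMap h i0 m s z (Sum.inr (i, j2, false))) := by
    intro i j1 j2 hj12
    have e : (PivotPattern k).neg (Sum.inr (i, j1, true)) (Sum.inr (i, j2, false)) :=
      ⟨rfl, Or.inl ⟨hj12, rfl, rfl⟩⟩
    rw [shiftMap_inr, shiftMap_inr]
    by_cases hr2 : i = i0 ∧ m.val ≤ j2.val
    · by_cases hr1 : i = i0 ∧ m.val ≤ j1.val
      · rw [if_pos hr1, if_pos hr2, if_neg (show ¬ j2.val = m.val by omega)]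
        by_cases hj1m : j1.val = m.val
        · rw [if_pos hj1m]
          refine (SubdivOne Q u v).neg_symm (hconn _ (!s) ?_)
          have hh := hmap_far i ⟨j2.val - 1, Nat.lt_of_le_of_lt (Nat.sub_le _ _) j2.isLt⟩
            hr1.1 (Fin.ext (show j2.val - 1 = m.val by omega))
          exact hh.trans (by cases s <;> rfl)
        · rw [if_neg hj1m]
          have e' : (PivotPattern k).neg
              (Sum.inr (i, ⟨j1.val - 1, Nat.lt_of_le_of_lt (Nat.sub_le _ _) j1.isLt⟩, true))
              (Sum.inr (i, ⟨j2.val - 1, Nat.lt_of_le_of_lt (Nat.sub_le _ _) j2.isLt⟩, false)) :=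
            ⟨rfl, Or.inl ⟨show j2.val - 1 = (j1.val - 1) + 1 by omega, rfl, rfl⟩⟩
          refine ⟨hn _ _ e', hsurv _ _ e' ?_ ?_⟩
          · intro hcon
            injection hcon with hcon
            injection hcon with h1 hcon2
            injection hcon2 with h2 h3
            exact Bool.noConfusion h3
          · intro hcon
            injection hcon with hcon
            injection hcon with h1 hcon2
            injection hcon2 with h2 h3
            have h2' : j2.val - 1 = m.val := congrArg Fin.val h2
            omega
      · -- this is exactly the subdivided edge : m = j2
        rw [if_neg hr1, if_pos hr2, if_pos (show j2.val = m.val by omega)]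
        refine hconn _ s ?_
        apply hmap_prev
        unfold prevPt
        erw [if_neg (show ¬ m.val = 0 by omega)]
        have hj1 : j1 = ⟨m.val - 1, Nat.lt_of_le_of_lt (Nat.sub_le _ _) m.isLt⟩ :=
          Fin.ext (show j1.val = m.val - 1 by omega)
        rw [hr2.1, hj1]
    · have hr1 : ¬ (i = i0 ∧ m.val ≤ j1.val) := fun hh => hr2 ⟨hh.1, by omega⟩
      rw [if_neg hr1, if_neg hr2]
      refine ⟨hn _ _ e, hsurv _ _ e ?_ ?_⟩
      · intro hcon
        injection hcon with hcon
        injection hcon with h1 hcon2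
        injection hcon2 with h2 h3
        exact Bool.noConfusion h3
      · intro hcon
        injection hcon with hcon
        injection hcon with h1 hcon2
        injection hcon2 with h2 h3
        exact hr2 ⟨h1, le_of_eq (congrArg Fin.val h2).symm⟩
  -- negative edges are preserved
  have fneg : ∀ x y, (PivotPattern k).neg x y →
      (SubdivOne Q u v).neg (shiftMap h i0 m s z x) (shiftMap h i0 m s z y) := by
    intro x y e
    rcases x with c | ⟨i, j, b⟩
    · rcases y with c' | ⟨i', j', b'⟩
      · exact e.elim
      · exact negA c i' j' b' e
    · rcases y with c' | ⟨i', j', b'⟩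
      · exact (SubdivOne Q u v).neg_symm (negA c' i j b ((PivotPattern k).neg_symm e))
      · obtain ⟨hi, hd⟩ := e
        have hi' : i = i' := hi
        subst hi'
        rcases hd with ⟨h1, rfl, rfl⟩ | ⟨h1, rfl, rfl⟩
        · exact negB i j j' h1
        · exact (SubdivOne Q u v).neg_symm (negB i j' j h1)
  -- parts are preserved
  have fpp : PreservesParts (PivotPattern k) (SubdivOne Q u v) (shiftMap h i0 m s z) := by
    intro x y hxy hq
    rcases x with c | ⟨i, j, b⟩ <;> rcases y with c' | ⟨i', j', b'⟩
    · exact hxy trivial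
    · rw [shiftMap_inl, shiftMap_inr] at hq
      split_ifs at hq
      · exact hq
      · exact hback _ _ hq
      · exact hback _ _ hq
    · rw [shiftMap_inl, shiftMap_inr] at hq
      split_ifs at hq
      · exact hq
      · exact hback _ _ hq
      · exact hback _ _ hq
    · rw [shiftMap_inr, shiftMap_inr] at hq
      by_cases a1 : i = i0 ∧ m.val ≤ j.val <;> by_cases b1 : i' = i0 ∧ m.val ≤ j'.val
      · rw [if_pos a1, if_pos b1] at hq
        by_cases a2 : j.val = m.val <;> by_cases b2 : j'.val = m.val
        · exact hxy ⟨a1.1.trans b1.1.symm, Fin.ext (a2.trans b2.symm)⟩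
        · rw [if_pos a2, if_neg b2] at hq
          exact hq
        · rw [if_neg a2, if_pos b2] at hq
          exact hq
        · rw [if_neg a2, if_neg b2] at hq
          obtain ⟨hi, hj⟩ := hback _ _ hq
          have hi' : i = i' := hi
          have hj' : j.val - 1 = j'.val - 1 := congrArg Fin.val hj
          exact hxy ⟨hi', Fin.ext (show j.val = j'.val by omega)⟩
      · rw [if_pos a1, if_neg b1] at hq
        by_cases a2 : j.val = m.val
        · rw [if_pos a2] at hq
          exact hq
        · rw [if_neg a2] at hq
          obtain ⟨hi, hj⟩ := hback _ _ hq
          have hi' : i = i' := hi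
          have hj' : j.val - 1 = j'.val := congrArg Fin.val hj
          have hb1 : ¬ m.val ≤ j'.val := fun hh => b1 ⟨hi'.symm.trans a1.1, hh⟩
          omega
      · rw [if_neg a1, if_pos b1] at hq
        by_cases b2 : j'.val = m.val
        · rw [if_pos b2] at hq
          exact hq
        · rw [if_neg b2] at hq
          obtain ⟨hi, hj⟩ := hback _ _ hq
          have hi' : i = i' := hi
          have hj' : j.val = j'.val - 1 := congrArg Fin.val hj
          have ha1 : ¬ m.val ≤ j.val := fun hh => a1 ⟨hi'.trans b1.1, hh⟩
          omega
      · rw [if_neg a1, if_neg b1] at hq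
        obtain ⟨hi, hj⟩ := hback _ _ hq
        have hi' : i = i' := hi
        have hj' : j = j' := hj
        exact hxy ⟨hi', hj'⟩
  exact ⟨shiftMap h i0 m s z, ⟨fsim, fun x y hxy => hxy.elim, fneg⟩, fpp⟩
lemma SP_subdivOne {k : ℕ} {Q : Pattern} (u v : Q.X)
    (hSP : SP (PivotPattern k) Q) : SP (PivotPattern k) (SubdivOne Q u v) := by
  obtain ⟨h, hhom, hpp⟩ := hSP
  by_cases hc : ∃ x y, (PivotPattern k).neg x y ∧ Q.sim (h x) u ∧ Q.sim (h y) v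
  · obtain ⟨x0, y0, e, hxu, hyv⟩ := hc
    rcases x0 with c | ⟨i, j1, b1⟩
    · rcases y0 with c' | ⟨i2, j2, b2⟩
      · exact e.elim
      · obtain ⟨hcc, hj0, hb⟩ := e
        subst hb
        have hj0' : j2.val = 0 := hj0
        have hcc' : (c = false ∧ i2.val ≤ 1) ∨ (c = true ∧ i2.val = 2) := hcc
        refine step_with_edge h hhom hpp i2 j2 false
          ⟨(h (Sum.inl c), h (Sum.inr (i2, j2, false))), hxu, hyv,
            hhom.2.2 (Sum.inl c) (Sum.inr (i2, j2, false)) ⟨hcc, hj0, rfl⟩⟩ ?_ ?_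
        · show h (Sum.inl c) = h (prevPt k i2 j2)
          apply congrArg h
          unfold prevPt
          erw [if_pos hj0']
          exact congrArg Sum.inl (center_decide hcc')
        · rfl
    · rcases y0 with c' | ⟨i2, j2, b2⟩
      · obtain ⟨hcc, hj0, hb⟩ := e
        subst hb
        have hj0' : j1.val = 0 := hj0
        have hcc' : (c' = false ∧ i.val ≤ 1) ∨ (c' = true ∧ i.val = 2) := hcc
        refine step_with_edge h hhom hpp i j1 true
          ⟨(h (Sum.inr (i, j1, false)), h (Sum.inl c')), hxu, hyv,
            hhom.2.2 (Sum.inr (i, j1, false)) (Sum.inl c') ⟨hcc, hj0, rfl⟩⟩ ?_ ?_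
        · show h (Sum.inl c') = h (prevPt k i j1)
          apply congrArg h
          unfold prevPt
          erw [if_pos hj0']
          exact congrArg Sum.inl (center_decide hcc')
        · rfl
      · obtain ⟨hii, hd⟩ := e
        have hii' : i = i2 := hii
        subst hii'
        rcases hd with ⟨h1, rfl, rfl⟩ | ⟨h1, rfl, rfl⟩
        · have h1' : j2.val = j1.val + 1 := h1
          refine step_with_edge h hhom hpp i j2 false
            ⟨(h (Sum.inr (i, j1, true)), h (Sum.inr (i, j2, false))), hxu, hyv,
              hhom.2.2 (Sum.inr (i, j1, true)) (Sum.inr (i, j2, false))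
                ⟨rfl, Or.inl ⟨h1, rfl, rfl⟩⟩⟩ ?_ ?_
          · show h (Sum.inr (i, j1, true)) = h (prevPt k i j2)
            apply congrArg h
            unfold prevPt
            erw [if_neg (show ¬ j2.val = 0 by omega)]
            have hj : j1 = (⟨j2.val - 1, Nat.lt_of_le_of_lt (Nat.sub_le _ _) j2.isLt⟩ : Fin k) :=
              Fin.ext (show j1.val = j2.val - 1 by omega)
            rw [hj]
          · rfl
        · have h1' : j1.val = j2.val + 1 := h1
          refine step_with_edge h hhom hpp i j1 true
            ⟨(h (Sum.inr (i, j1, false)), h (Sum.inr (i, j2, true))), hxu, hyv,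
              hhom.2.2 (Sum.inr (i, j1, false)) (Sum.inr (i, j2, true))
                ⟨rfl, Or.inr ⟨h1, rfl, rfl⟩⟩⟩ ?_ ?_
          · show h (Sum.inr (i, j2, true)) = h (prevPt k i j1)
            apply congrArg h
            unfold prevPt
            erw [if_neg (show ¬ j1.val = 0 by omega)]
            have hj : j2 = (⟨j1.val - 1, Nat.lt_of_le_of_lt (Nat.sub_le _ _) j1.isLt⟩ : Fin k) :=
              Fin.ext (show j2.val = j1.val - 1 by omega)
            rw [hj]
          · rfl
  · refine ⟨fun p => Sum.inl (h p), ⟨fun x y hxy => hhom.1 x y hxy, fun x y hxy => hxy.elim, ?_⟩,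
      fun x y hxy hq => hpp x y hxy hq⟩
    intro x y e
    refine ⟨hhom.2.2 x y e, ?_⟩
    rintro (⟨ha, hb⟩ | ⟨ha, hb⟩)
    · exact hc ⟨x, y, e, ha, hb⟩
    · exact hc ⟨y, x, (PivotPattern k).neg_symm e, hb, ha⟩

lemma SP_subdiv {k : ℕ} {Q : Pattern} (hQ : IsSubdivision (PivotPattern k) Q) :
    SP (PivotPattern k) Q := by
  induction hQ with
  | refl => exact SP_refl _
  | tail _ hstep ih =>
      obtain ⟨u, v, huv, rfl⟩ := hstep
      exact SP_subdivOne u v ih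

/-- `Pivot(k)` occurs as a sub-pattern in every subdivision of
itself; hence `ForbSP(Pivot(k)) = ForbTM(Pivot(k))`. -/
theorem pivot_SP_subdivision_and_ForbSP_eq_ForbTM (k : ℕ) (hk : 0 < k) :
    (∀ Q : Pattern, IsSubdivision (PivotPattern k) Q → SP (PivotPattern k) Q) ∧
    ForbSP (PivotPattern k) = ForbTM (PivotPattern k) := by
  refine ⟨fun Q hQ => SP_subdiv hQ, ?_⟩
  ext I
  simp only [ForbSP, ForbTM, Set.mem_setOf_eq]
  constructor
  · intro hns htm
    obtain ⟨P', hsub, hsp⟩ := htm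
    exact hns (SP_trans (SP_subdiv hsub) hsp)
  · intro hntm hsp
    exact hntm ⟨_, Relation.ReflTransGen.refl, hsp⟩
end
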